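/- arXiv:1201.3747 — 3 statements merged into one kernel-verified Lean document; each statement's English description precedes it below -/
import Mathlib

section
/- The effective Hamiltonian satisfies H̄(0) = 0; i.e., for p = 0 the unique constant λ for which the cell problem admits a smooth ℤᵈ-periodic solution is λ = 0. -/
open MeasureTheory Filter Set
open scoped Topology

noncomputable section

/-- `ℝᵈ` as a Euclidean space. -/
abbrev Euc (d : ℕ) := EuclideanSpace ℝ (Fin d)

/-- `ℤᵈ`-periodicity of a function on `ℝᵈ`. -/
def ZPer {d : ℕ} (f : Euc d → ℝ) : Prop :=
  ∀ (x : Euc d) (k : Fin d → ℤ),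
    f (x + (EuclideanSpace.equiv (Fin d) ℝ).symm (fun i => (k i : ℝ))) = f x

/-- The Laplacian of a scalar function on `ℝᵈ`. -/
def lap {d : ℕ} (f : Euc d → ℝ) (x : Euc d) : ℝ :=
  ∑ i : Fin d,
    fderiv ℝ (fun y => fderiv ℝ f y (EuclideanSpace.single i 1)) x (EuclideanSpace.single i 1)

/-- The divergence of a vector field on `ℝᵈ`. -/
def dvg {d : ℕ} (F : Euc d → Euc d) (x : Euc d) : ℝ :=
  ∑ i : Fin d, fderiv ℝ (fun y => F y i) x (EuclideanSpace.single i 1)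

/-- The data `ψ, ν¹, ν²` are smooth, `ℤᵈ`-periodic, with `ν¹ > 0`, `ν² > 0`. -/
def GoodData {d : ℕ} (ψ ν1 ν2 : Euc d → ℝ) : Prop :=
  ContDiff ℝ (⊤ : ℕ∞) ψ ∧ ContDiff ℝ (⊤ : ℕ∞) ν1 ∧ ContDiff ℝ (⊤ : ℕ∞) ν2 ∧
  ZPer ψ ∧ ZPer ν1 ∧ ZPer ν2 ∧ (∀ y, 0 < ν1 y) ∧ (∀ y, 0 < ν2 y)

/-- `(n1, n2)` is a classical solution of the weakly coupled Fokker–Planck system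
`∂ₜn¹ − εΔn¹ − div(n¹ Dψ(x/ε)) + ε⁻¹ν¹(x/ε)n¹ = ε⁻¹ν²(x/ε)n²`,
`∂ₜn² − εΔn² + ε⁻¹ν²(x/ε)n² = ε⁻¹ν¹(x/ε)n¹` on `ℝᵈ × (0,∞)`,
continuous up to `t = 0`. -/
def IsFP {d : ℕ} (ψ ν1 ν2 : Euc d → ℝ) (ε : ℝ) (n1 n2 : Euc d → ℝ → ℝ) : Prop :=
  ContinuousOn (fun q : Euc d × ℝ => n1 q.1 q.2) (univ ×ˢ Ici 0) ∧
  ContinuousOn (fun q : Euc d × ℝ => n2 q.1 q.2) (univ ×ˢ Ici 0) ∧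
  ContDiffOn ℝ (⊤ : ℕ∞) (fun q : Euc d × ℝ => n1 q.1 q.2) (univ ×ˢ Ioi 0) ∧
  ContDiffOn ℝ (⊤ : ℕ∞) (fun q : Euc d × ℝ => n2 q.1 q.2) (univ ×ˢ Ioi 0) ∧
  (∀ (x : Euc d) (t : ℝ), 0 < t →
    deriv (fun s => n1 x s) t - ε * lap (fun y => n1 y t) x
      - dvg (fun y => n1 y t • gradient ψ (ε⁻¹ • y)) x
      + ε⁻¹ * ν1 (ε⁻¹ • x) * n1 x t = ε⁻¹ * ν2 (ε⁻¹ • x) * n2 x t) ∧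
  (∀ (x : Euc d) (t : ℝ), 0 < t →
    deriv (fun s => n2 x s) t - ε * lap (fun y => n2 y t) x
      + ε⁻¹ * ν2 (ε⁻¹ • x) * n2 x t = ε⁻¹ * ν1 (ε⁻¹ • x) * n1 x t)

/-- `(φ1, φ2)` is a smooth `ℤᵈ`-periodic solution of the cell problem at `p` with constant `lam`:
`−Δφ¹ + |Dφ¹+p|² − Dψ·(Dφ¹+p) + Δψ + ν² e^{φ¹−φ²} = ν¹ + λ`,
`−Δφ² + |Dφ²+p|² + ν¹ e^{φ²−φ¹} = ν² + λ`. -/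
def IsCellSol {d : ℕ} (ψ ν1 ν2 : Euc d → ℝ) (p : Euc d) (lam : ℝ) (φ1 φ2 : Euc d → ℝ) : Prop :=
  ContDiff ℝ (⊤ : ℕ∞) φ1 ∧ ContDiff ℝ (⊤ : ℕ∞) φ2 ∧ ZPer φ1 ∧ ZPer φ2 ∧
  (∀ y, -lap φ1 y + ‖gradient φ1 y + p‖ ^ 2
      - (@inner ℝ _ _ (gradient ψ y) (gradient φ1 y + p)) + lap ψ y
      + ν2 y * Real.exp (φ1 y - φ2 y) = ν1 y + lam) ∧
  (∀ y, -lap φ2 y + ‖gradient φ2 y + p‖ ^ 2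
      + ν1 y * Real.exp (φ2 y - φ1 y) = ν2 y + lam)

section AuxEH
variable {d : ℕ}

lemma eh_gradient_coord (f : Euc d → ℝ) (y : Euc d) (i : Fin d) :
    gradient f y i = fderiv ℝ f y (EuclideanSpace.single i 1) := by
  have h : fderiv ℝ f y (EuclideanSpace.single i 1)
      = @inner ℝ _ _ (gradient f y) (EuclideanSpace.single i 1) := by
    rw [gradient, InnerProductSpace.toDual_symm_apply]
  rw [h, real_inner_comm, EuclideanSpace.inner_single_left]
  simp

lemma eh_inner_sum (x y : Euc d) : @inner ℝ _ _ x y = ∑ i, x i * y i := by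
  simp [PiLp.inner_apply, RCLike.inner_apply, mul_comm]

lemma eh_norm_sq (x : Euc d) : ‖x‖ ^ 2 = ∑ i, x i * x i := by
  rw [← real_inner_self_eq_norm_sq, eh_inner_sum]

lemma eh_contDiff_fderiv_apply {f : Euc d → ℝ} (hf : ContDiff ℝ (⊤ : ℕ∞) f) (v : Euc d) :
    ContDiff ℝ (⊤ : ℕ∞) (fun y => fderiv ℝ f y v) :=
  (hf.fderiv_right (by exact_mod_cast le_top)).clm_apply contDiff_const

lemma eh_fderiv_shift {f : Euc d → ℝ} (hf : Differentiable ℝ f) (c x : Euc d) :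
    fderiv ℝ (fun y => f (y + c)) x = fderiv ℝ f (x + c) := by
  have h1 : HasFDerivAt (fun y : Euc d => y + c) (ContinuousLinearMap.id ℝ (Euc d)) x :=
    (hasFDerivAt_id x).add_const c
  have h2 := ((hf (x + c)).hasFDerivAt.comp x h1).fderiv
  simpa [Function.comp_def] using h2

lemma eh_fderiv_periodic {f : Euc d → ℝ} (hf : Differentiable ℝ f) (hper : ZPer f)
    (x : Euc d) (k : Fin d → ℤ) :
    fderiv ℝ f (x + (EuclideanSpace.equiv (Fin d) ℝ).symm (fun i => (k i : ℝ)))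
      = fderiv ℝ f x := by
  rw [← eh_fderiv_shift hf _ x]
  have heq : (fun y => f (y + (EuclideanSpace.equiv (Fin d) ℝ).symm (fun i => (k i : ℝ)))) = f :=
    funext fun y => hper y k
  rw [heq]

lemma eh_fderiv_mul_apply {f g : Euc d → ℝ} {x : Euc d}
    (hf : DifferentiableAt ℝ f x) (hg : DifferentiableAt ℝ g x) (v : Euc d) :
    fderiv ℝ (fun y => f y * g y) x v
      = f x * fderiv ℝ g x v + g x * fderiv ℝ f x v := by
  rw [fderiv_fun_mul hf hg]
  simp [mul_comm]

lemma eh_fderiv_exp_neg {f : Euc d → ℝ} (hf : Differentiable ℝ f) (x v : Euc d) :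
    fderiv ℝ (fun y => Real.exp (-(f y))) x v
      = -(Real.exp (-(f x)) * fderiv ℝ f x v) := by
  have h : HasFDerivAt (fun y => Real.exp (-(f y)))
      (Real.exp (-(f x)) • (-(fderiv ℝ f x))) x := ((hf x).hasFDerivAt.neg).exp
  rw [h.fderiv]
  simp [mul_comm]

lemma eh_fderiv_comb {p q r : Euc d → ℝ} {x : Euc d}
    (hp : DifferentiableAt ℝ p x) (hq : DifferentiableAt ℝ q x)
    (hr : DifferentiableAt ℝ r x) (v : Euc d) :
    fderiv ℝ (fun y => -(p y) - q y + r y) x v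
      = -(fderiv ℝ p x v) - fderiv ℝ q x v + fderiv ℝ r x v := by
  rw [fderiv_fun_add (hp.fun_neg.fun_sub hq) hr, fderiv_fun_sub hp.fun_neg hq, fderiv_fun_neg]
  simp

/-- The per-coordinate derivative of the flux vector field. -/
lemma eh_fderiv_W_apply {φ1 φ2 ψ : Euc d → ℝ}
    (h1 : ContDiff ℝ (⊤ : ℕ∞) φ1) (h2 : ContDiff ℝ (⊤ : ℕ∞) φ2)
    (hψ : ContDiff ℝ (⊤ : ℕ∞) ψ) (i : Fin d) (z v : Euc d) :
    fderiv ℝ (fun y =>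
        -(Real.exp (-(φ1 y)) * fderiv ℝ φ1 y (EuclideanSpace.single i 1))
        - Real.exp (-(φ2 y)) * fderiv ℝ φ2 y (EuclideanSpace.single i 1)
        + Real.exp (-(φ1 y)) * fderiv ℝ ψ y (EuclideanSpace.single i 1)) z v
      = Real.exp (-(φ1 z)) * (fderiv ℝ φ1 z (EuclideanSpace.single i 1) * fderiv ℝ φ1 z v
            - fderiv ℝ (fun y => fderiv ℝ φ1 y (EuclideanSpace.single i 1)) z v)
        + Real.exp (-(φ2 z)) * (fderiv ℝ φ2 z (EuclideanSpace.single i 1) * fderiv ℝ φ2 z v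
            - fderiv ℝ (fun y => fderiv ℝ φ2 y (EuclideanSpace.single i 1)) z v)
        + Real.exp (-(φ1 z)) * (fderiv ℝ (fun y => fderiv ℝ ψ y (EuclideanSpace.single i 1)) z v
            - fderiv ℝ ψ z (EuclideanSpace.single i 1) * fderiv ℝ φ1 z v) := by
  have h1d : Differentiable ℝ φ1 := h1.differentiable (by simp)
  have h2d : Differentiable ℝ φ2 := h2.differentiable (by simp)
  have hψd : Differentiable ℝ ψ := hψ.differentiable (by simp)
  have hm1 : DifferentiableAt ℝ (fun y => Real.exp (-(φ1 y))) z := ((h1d z).neg).exp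
  have hm2 : DifferentiableAt ℝ (fun y => Real.exp (-(φ2 y))) z := ((h2d z).neg).exp
  have hA1 : DifferentiableAt ℝ (fun y => fderiv ℝ φ1 y (EuclideanSpace.single i 1)) z :=
    ((eh_contDiff_fderiv_apply h1 _).differentiable (by simp)) z
  have hA2 : DifferentiableAt ℝ (fun y => fderiv ℝ φ2 y (EuclideanSpace.single i 1)) z :=
    ((eh_contDiff_fderiv_apply h2 _).differentiable (by simp)) z
  have hAψ : DifferentiableAt ℝ (fun y => fderiv ℝ ψ y (EuclideanSpace.single i 1)) z :=
    ((eh_contDiff_fderiv_apply hψ _).differentiable (by simp)) z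
  rw [eh_fderiv_comb (hm1.fun_mul hA1) (hm2.fun_mul hA2) (hm1.fun_mul hAψ) v,
    eh_fderiv_mul_apply hm1 hA1 v, eh_fderiv_mul_apply hm2 hA2 v,
    eh_fderiv_mul_apply hm1 hAψ v, eh_fderiv_exp_neg h1d z v, eh_fderiv_exp_neg h2d z v]
  ring

end AuxEH

/-- **Lemma 2.1.** The effective Hamiltonian satisfies `H̄(0) = 0`. -/
theorem effective_hamiltonian_zero_at_zero
    {d : ℕ} (hd : 1 ≤ d) (ψ ν1 ν2 : Euc d → ℝ) (hdata : GoodData ψ ν1 ν2)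
    (Hbar : Euc d → ℝ)
    (hHbar : ∀ (p : Euc d) (lam : ℝ),
      (∃ φ1 φ2 : Euc d → ℝ, IsCellSol ψ ν1 ν2 p lam φ1 φ2) ↔ lam = Hbar p) :
    Hbar 0 = 0 := by
  classical
  obtain ⟨hψ, hν1s, hν2s, hψper, hν1per, hν2per, hν1pos, hν2pos⟩ := hdata
  obtain ⟨φ1, φ2, hφ1, hφ2, hp1, hp2, he1, he2⟩ := (hHbar 0 (Hbar 0)).mpr rfl
  set lam := Hbar 0 with hlamdef
  obtain ⟨n, rfl⟩ : ∃ n, d = n + 1 := ⟨d - 1, (Nat.succ_pred_eq_of_pos hd).symm⟩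
  have hφ1d : Differentiable ℝ φ1 := hφ1.differentiable (by simp)
  have hφ2d : Differentiable ℝ φ2 := hφ2.differentiable (by simp)
  have hψd : Differentiable ℝ ψ := hψ.differentiable (by simp)
  -- the flux vector field
  set W : Fin (n+1) → Euc (n+1) → ℝ := fun i y =>
      -(Real.exp (-(φ1 y)) * fderiv ℝ φ1 y (EuclideanSpace.single i 1))
      - Real.exp (-(φ2 y)) * fderiv ℝ φ2 y (EuclideanSpace.single i 1)
      + Real.exp (-(φ1 y)) * fderiv ℝ ψ y (EuclideanSpace.single i 1) with hWdef
  have hWs : ∀ i, ContDiff ℝ (⊤ : ℕ∞) (W i) := by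
    intro i
    exact (((Real.contDiff_exp.comp hφ1.neg).mul (eh_contDiff_fderiv_apply hφ1 _)).neg.sub
      ((Real.contDiff_exp.comp hφ2.neg).mul (eh_contDiff_fderiv_apply hφ2 _))).add
      ((Real.contDiff_exp.comp hφ1.neg).mul (eh_contDiff_fderiv_apply hψ _))
  have hWd : ∀ i, Differentiable ℝ (W i) :=
    fun i => (hWs i).differentiable (by simp)
  -- key pointwise identity: the divergence of W equals `lam * (e^{-φ1} + e^{-φ2})`
  have hkey : ∀ z : Euc (n+1),
      ∑ i, fderiv ℝ (W i) z (EuclideanSpace.single i 1)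
        = lam * (Real.exp (-(φ1 z)) + Real.exp (-(φ2 z))) := by
    intro z
    have hrw : ∀ i : Fin (n+1), fderiv ℝ (W i) z (EuclideanSpace.single i 1)
        = Real.exp (-(φ1 z)) * (fderiv ℝ φ1 z (EuclideanSpace.single i 1)
                * fderiv ℝ φ1 z (EuclideanSpace.single i 1)
              - fderiv ℝ (fun y => fderiv ℝ φ1 y (EuclideanSpace.single i 1)) z
                  (EuclideanSpace.single i 1))
          + Real.exp (-(φ2 z)) * (fderiv ℝ φ2 z (EuclideanSpace.single i 1)
                * fderiv ℝ φ2 z (EuclideanSpace.single i 1)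
              - fderiv ℝ (fun y => fderiv ℝ φ2 y (EuclideanSpace.single i 1)) z
                  (EuclideanSpace.single i 1))
          + Real.exp (-(φ1 z)) * (fderiv ℝ (fun y => fderiv ℝ ψ y (EuclideanSpace.single i 1)) z
                  (EuclideanSpace.single i 1)
              - fderiv ℝ ψ z (EuclideanSpace.single i 1)
                * fderiv ℝ φ1 z (EuclideanSpace.single i 1)) := by
      intro i
      rw [hWdef]
      exact eh_fderiv_W_apply hφ1 hφ2 hψ i z (EuclideanSpace.single i 1)
    rw [Finset.sum_congr rfl fun i _ => hrw i]
    have hE1 := he1 z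
    have hE2 := he2 z
    simp only [add_zero] at hE1 hE2
    rw [eh_norm_sq, eh_inner_sum] at hE1
    rw [eh_norm_sq] at hE2
    simp only [eh_gradient_coord] at hE1 hE2
    simp only [lap] at hE1 hE2
    have hexp1 : Real.exp (-(φ1 z)) * Real.exp (φ1 z - φ2 z) = Real.exp (-(φ2 z)) := by
      rw [← Real.exp_add]; congr 1; ring
    have hexp2 : Real.exp (-(φ2 z)) * Real.exp (φ2 z - φ1 z) = Real.exp (-(φ1 z)) := by
      rw [← Real.exp_add]; congr 1; ring
    simp only [Finset.sum_add_distrib, ← Finset.mul_sum, Finset.sum_sub_distrib]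
    linear_combination Real.exp (-(φ1 z)) * hE1 + Real.exp (-(φ2 z)) * hE2
      - ν2 z * hexp1 - ν1 z * hexp2
  -- periodicity of W
  have hWper : ∀ (i : Fin (n+1)) (x : Euc (n+1)) (k : Fin (n+1) → ℤ),
      W i (x + (EuclideanSpace.equiv (Fin (n+1)) ℝ).symm (fun j => (k j : ℝ))) = W i x := by
    intro i x k
    rw [hWdef]
    simp only
    rw [hp1 x k, hp2 x k, eh_fderiv_periodic hφ1d hp1 x k, eh_fderiv_periodic hφ2d hp2 x k,
      eh_fderiv_periodic hψd hψper x k]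
  -- move to the pi-type model
  set eqv := EuclideanSpace.equiv (Fin (n+1)) ℝ with heqv
  set g : Fin (n+1) → (Fin (n+1) → ℝ) → ℝ := fun i x => W i (eqv.symm x) with hgdef
  set g' : Fin (n+1) → (Fin (n+1) → ℝ) → (Fin (n+1) → ℝ) →L[ℝ] ℝ := fun i x =>
    (fderiv ℝ (W i) (eqv.symm x)).comp
      (eqv.symm : (Fin (n+1) → ℝ) →L[ℝ] Euc (n+1)) with hg'def
  have hgderiv : ∀ i x, HasFDerivAt (g i) (g' i x) x := by
    intro i x
    exact ((hWd i _).hasFDerivAt.comp x (eqv.symm.hasFDerivAt))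
  have hsingle : ∀ i : Fin (n+1),
      eqv.symm (Pi.single i (1:ℝ)) = EuclideanSpace.single i 1 := fun i => rfl
  have hg'apply : ∀ i x, g' i x (Pi.single i 1)
      = fderiv ℝ (W i) (eqv.symm x) (EuclideanSpace.single i 1) := by
    intro i x
    rw [hg'def]
    simp only [ContinuousLinearMap.comp_apply, ContinuousLinearEquiv.coe_coe]
    rw [hsingle i]
  have hle01 : (0 : Fin (n+1) → ℝ) ≤ 1 := fun i => zero_le_one
  have c1 : Continuous φ1 := hφ1.continuous
  have c2 : Continuous φ2 := hφ2.continuous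
  have Hc : ∀ i, ContinuousOn (g i) (Icc (0 : Fin (n+1) → ℝ) 1) := by
    intro i
    exact ((hWs i).continuous.comp eqv.symm.continuous).continuousOn
  have Hd : ∀ x ∈ (Set.pi univ fun i => Ioo ((0 : Fin (n+1) → ℝ) i) ((1 : Fin (n+1) → ℝ) i))
      \ (∅ : Set (Fin (n+1) → ℝ)), ∀ i, HasFDerivAt (g i) (g' i x) x :=
    fun x _ i => hgderiv i x
  have hdiveq : (fun x : Fin (n+1) → ℝ => ∑ i, g' i x (Pi.single i 1))
      = fun x => lam * (Real.exp (-(φ1 (eqv.symm x))) + Real.exp (-(φ2 (eqv.symm x)))) := by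
    funext x
    simp only [hg'apply]
    exact hkey _
  have Hi : IntegrableOn (fun x : Fin (n+1) → ℝ => ∑ i, g' i x (Pi.single i 1))
      (Icc (0 : Fin (n+1) → ℝ) 1) := by
    rw [hdiveq]
    refine (Continuous.continuousOn ?_).integrableOn_compact isCompact_Icc
    fun_prop
  have hdiv := integral_divergence_of_hasFDerivAt_off_countable
      (a := (0 : Fin (n+1) → ℝ)) (b := 1) hle01 (fun x i => g i x)
      (fun x => ContinuousLinearMap.pi fun i => g' i x) ∅ countable_empty
      (continuousOn_pi.2 Hc) (fun x hx => hasFDerivAt_pi.2 fun i => hgderiv i x) Hi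
  -- the boundary terms cancel by periodicity
  have hface : ∀ (i : Fin (n+1)) (x : Fin n → ℝ),
      g i (i.insertNth ((1 : Fin (n+1) → ℝ) i) x) = g i (i.insertNth ((0 : Fin (n+1) → ℝ) i) x) := by
    intro i x
    have hins : (i.insertNth ((1 : Fin (n+1) → ℝ) i) x : Fin (n+1) → ℝ)
        = i.insertNth ((0 : Fin (n+1) → ℝ) i) x + (Pi.single i 1 : Fin (n+1) → ℝ) := by
      funext j
      rcases eq_or_ne j i with rfl | hj
      · simp
      · obtain ⟨l, rfl⟩ := Fin.exists_succAbove_eq hj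
        simp [Fin.insertNth_apply_succAbove, Pi.single_eq_of_ne (Fin.succAbove_ne i l)]
    have hk : (fun j => ((Pi.single i (1:ℤ) : Fin (n+1) → ℤ) j : ℝ)) = Pi.single i (1:ℝ) := by
      funext j
      rcases eq_or_ne j i with rfl | hj
      · simp
      · simp [Pi.single_eq_of_ne hj]
    rw [hgdef]
    simp only
    rw [hins, map_add]
    have := hWper i (eqv.symm (i.insertNth ((0 : Fin (n+1) → ℝ) i) x)) (Pi.single i (1:ℤ))
    rw [hk] at this
    exact this
  simp only [ContinuousLinearMap.pi_apply, hg'apply, hkey, hface, sub_self,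
    Finset.sum_const_zero] at hdiv
  -- conclude
  have hIpos : 0 < ∫ x in Icc (0 : Fin (n+1) → ℝ) 1,
      (Real.exp (-(φ1 (eqv.symm x))) + Real.exp (-(φ2 (eqv.symm x)))) := by
    refine (setIntegral_pos_iff_support_of_nonneg_ae ?_ ?_).2 ?_
    · filter_upwards with x using le_of_lt (by positivity)
    · refine (Continuous.continuousOn ?_).integrableOn_compact isCompact_Icc
      fun_prop
    · have hs : Function.support (fun x : Fin (n+1) → ℝ =>
          Real.exp (-(φ1 (eqv.symm x))) + Real.exp (-(φ2 (eqv.symm x)))) = univ :=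
        eq_univ_of_forall fun x => ne_of_gt (by positivity)
      rw [hs, univ_inter, Real.volume_Icc_pi]
      simp
  rw [integral_const_mul] at hdiv
  have := mul_eq_zero.1 hdiv
  rcases this with h | h
  · exact h
  · exact absurd h (ne_of_gt hIpos)

end
end

section
/- The effective Hamiltonian H̄ : ℝᵈ → ℝ is strictly convex: for all p₁ ≠ p₂ in ℝᵈ and all θ ∈ (0,1), H̄(θp₁ + (1−θ)p₂) < θH̄(p₁) + (1−θ)H̄(p₂). -/
open MeasureTheory Filter Set
open scoped Topology

noncomputable section

namespace StrictCvx


variable {d : ℕ}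

local notation "⟪" x ", " y "⟫" => @inner ℝ _ _ x y

lemma inner_grad (f : Euc d → ℝ) (x v : Euc d) :
    ⟪gradient f x, v⟫ = fderiv ℝ f x v := by
  rw [gradient]
  exact InnerProductSpace.toDual_symm_apply

/-- differentiability of directional-derivative function of a smooth function -/
lemma diff_dfun {f : Euc d → ℝ} (hf : ContDiff ℝ (⊤ : ℕ∞) f) (e : Euc d) :
    Differentiable ℝ (fun y => fderiv ℝ f y e) := by
  have h1 : ContDiff ℝ (⊤ : ℕ∞) (fderiv ℝ f) := hf.fderiv_right (by exact_mod_cast le_top)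
  have h2 : Differentiable ℝ (fderiv ℝ f) := h1.differentiable (by simp)
  exact fun x => ((ContinuousLinearMap.apply ℝ ℝ e).differentiableAt).comp x (h2 x)

/-- the canonical 4-term combination we will use -/
lemma fderiv_comb4 {u v w g : Euc d → ℝ} (hu : DifferentiableAt ℝ u x)
    (hv : DifferentiableAt ℝ v x) (hw : DifferentiableAt ℝ w x) (hg : DifferentiableAt ℝ g x)
    (a b c e : ℝ) :
    fderiv ℝ (fun y => a * u y + b * v y - w y + c * g y) x
      = a • fderiv ℝ u x + b • fderiv ℝ v x - fderiv ℝ w x + c • fderiv ℝ g x := by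
  rw [fderiv_fun_add (((hu.const_mul a).fun_add (hv.const_mul b)).fun_sub hw) (hg.const_mul c),
    fderiv_fun_sub ((hu.const_mul a).fun_add (hv.const_mul b)) hw,
    fderiv_fun_add (hu.const_mul a) (hv.const_mul b),
    fderiv_const_mul hu a, fderiv_const_mul hv b, fderiv_const_mul hg c]

lemma grad_comb4 {u v w g : Euc d → ℝ} {x : Euc d} (hu : DifferentiableAt ℝ u x)
    (hv : DifferentiableAt ℝ v x) (hw : DifferentiableAt ℝ w x) (hg : DifferentiableAt ℝ g x)
    (a b c e : ℝ) :
    gradient (fun y => a * u y + b * v y - w y + c * g y) x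
      = a • gradient u x + b • gradient v x - gradient w x + c • gradient g x := by
  apply ext_inner_right ℝ
  intro z
  rw [inner_grad, fderiv_comb4 hu hv hw hg a b c e]
  simp only [ContinuousLinearMap.add_apply, ContinuousLinearMap.sub_apply,
    ContinuousLinearMap.smul_apply, smul_eq_mul]
  rw [inner_add_left, inner_sub_left, inner_add_left]
  rw [real_inner_smul_left, real_inner_smul_left, real_inner_smul_left]
  rw [inner_grad, inner_grad, inner_grad, inner_grad]

lemma lap_comb4 {u v w g : Euc d → ℝ} {x : Euc d} (hu : ContDiff ℝ (⊤ : ℕ∞) u)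
    (hv : ContDiff ℝ (⊤ : ℕ∞) v) (hw : ContDiff ℝ (⊤ : ℕ∞) w) (hg : ContDiff ℝ (⊤ : ℕ∞) g)
    (a b c e : ℝ) :
    lap (fun y => a * u y + b * v y - w y + c * g y) x
      = a * lap u x + b * lap v x - lap w x + c * lap g x := by
  unfold lap
  have key : ∀ y : Euc d, ∀ ee : Euc d,
      fderiv ℝ (fun z => a * u z + b * v z - w z + c * g z) y ee
      = a * (fderiv ℝ u y ee) + b * (fderiv ℝ v y ee) - (fderiv ℝ w y ee)
        + c * (fderiv ℝ g y ee) := by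
    intro y ee
    rw [fderiv_comb4 (hu.differentiable (by simp) y)
      (hv.differentiable (by simp) y)
      (hw.differentiable (by simp) y)
      (hg.differentiable (by simp) y) a b c e]
    simp
  have key2 : ∀ i : Fin d,
      fderiv ℝ (fun y => fderiv ℝ (fun z => a * u z + b * v z - w z + c * g z) y
          (EuclideanSpace.single i 1)) x (EuclideanSpace.single i 1)
      = a * fderiv ℝ (fun y => fderiv ℝ u y (EuclideanSpace.single i 1)) x (EuclideanSpace.single i 1)
        + b * fderiv ℝ (fun y => fderiv ℝ v y (EuclideanSpace.single i 1)) x (EuclideanSpace.single i 1)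
        - fderiv ℝ (fun y => fderiv ℝ w y (EuclideanSpace.single i 1)) x (EuclideanSpace.single i 1)
        + c * fderiv ℝ (fun y => fderiv ℝ g y (EuclideanSpace.single i 1)) x (EuclideanSpace.single i 1) := by
    intro i
    set ee := EuclideanSpace.single i (1:ℝ) with hee
    have : (fun y => fderiv ℝ (fun z => a * u z + b * v z - w z + c * g z) y ee)
        = fun y => a * (fderiv ℝ u y ee) + b * (fderiv ℝ v y ee) - (fderiv ℝ w y ee)
          + c * (fderiv ℝ g y ee) := by
      funext y; exact key y ee
    rw [this, fderiv_comb4 (diff_dfun hu ee x) (diff_dfun hv ee x) (diff_dfun hw ee x)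
      (diff_dfun hg ee x) a b c e]
    simp
  rw [Finset.sum_congr rfl (fun i _ => key2 i)]
  rw [Finset.sum_add_distrib, Finset.sum_sub_distrib, Finset.sum_add_distrib,
    ← Finset.mul_sum, ← Finset.mul_sum, ← Finset.mul_sum]



/-- Second derivative test: at a global max, each second directional derivative is ≤ 0. -/
lemma second_dir_nonpos {f : Euc d → ℝ} (hf : ContDiff ℝ (⊤ : ℕ∞) f) {x₀ : Euc d}
    (hmax : ∀ y, f y ≤ f x₀) (e : Euc d) :
    fderiv ℝ (fun y => fderiv ℝ f y e) x₀ e ≤ 0 := by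
  by_contra hpos
  push_neg at hpos
  have hdiff : Differentiable ℝ f := hf.differentiable (by simp)
  -- the line through x₀ in direction e
  have hc : ∀ t : ℝ, HasDerivAt (fun s : ℝ => x₀ + s • e) e t := by
    intro t
    have := ((hasDerivAt_id t).smul_const e).const_add x₀
    simpa using this
  set G : ℝ → ℝ := fun t => fderiv ℝ f (x₀ + t • e) e with hG
  have hGat : ∀ t : ℝ, HasDerivAt G (fderiv ℝ (fun y => fderiv ℝ f y e) (x₀ + t • e) e) t := by
    intro t
    exact ((diff_dfun hf e (x₀ + t • e)).hasFDerivAt).comp_hasDerivAt t (hc t)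
  have hG0 : G 0 = 0 := by
    have hloc : IsLocalMax f x₀ := Filter.Eventually.of_forall hmax
    have := hloc.fderiv_eq_zero
    simp [hG, this]
  have hGd : HasDerivAt G (fderiv ℝ (fun y => fderiv ℝ f y e) x₀ e) 0 := by
    have := hGat 0
    simpa using this
  -- G t > 0 for small positive t
  have hslope : Tendsto (slope G 0) (𝓝[≠] 0) (𝓝 (fderiv ℝ (fun y => fderiv ℝ f y e) x₀ e)) :=
    hasDerivAt_iff_tendsto_slope.mp hGd
  have hev : ∀ᶠ t in 𝓝[>] (0:ℝ), 0 < slope G 0 t := by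
    have : ∀ᶠ t in 𝓝[≠] (0:ℝ), 0 < slope G 0 t :=
      hslope.eventually (eventually_gt_nhds hpos)
    exact this.filter_mono (nhdsWithin_mono 0 (fun t ht => ne_of_gt ht))
  obtain ⟨u, hu, hsub⟩ := mem_nhdsGT_iff_exists_Ioo_subset.mp hev
  have hGpos : ∀ t ∈ Ioo (0:ℝ) u, 0 < G t := by
    intro t ht
    have h1 : 0 < slope G 0 t := hsub ht
    rw [slope_def_field, hG0, sub_zero, sub_zero] at h1
    have hne : t ≠ 0 := ne_of_gt ht.1
    have : G t = (G t / t) * t := by field_simp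
    rw [this]
    exact mul_pos h1 ht.1
  -- f restricted to the segment is strictly increasing, contradiction with max
  set g : ℝ → ℝ := fun t => f (x₀ + t • e) with hgdef
  have hgD : ∀ t : ℝ, HasDerivAt g (G t) t := by
    intro t
    exact ((hdiff (x₀ + t • e)).hasFDerivAt).comp_hasDerivAt t (hc t)
  have hupos : (0:ℝ) < u := hu
  set u' := u / 2 with hu'
  have hu'pos : 0 < u' := by positivity
  have hmono : StrictMonoOn g (Icc 0 u') := by
    apply strictMonoOn_of_deriv_pos (convex_Icc 0 u')
    · exact Continuous.continuousOn (by
        have : Continuous (fun t : ℝ => x₀ + t • e) := by continuity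
        exact (hf.continuous).comp this)
    · intro t ht
      rw [interior_Icc] at ht
      rw [(hgD t).deriv]
      exact hGpos t ⟨ht.1, by simp only [hu'] at ht; linarith [ht.2]⟩
  have hlt : g 0 < g u' := hmono (by constructor <;> simp [le_of_lt hu'pos]) 
      (by constructor <;> simp [le_of_lt hu'pos]) hu'pos
  have : g u' ≤ g 0 := by
    simp only [hgdef]
    simpa using hmax (x₀ + u' • e)
  linarith

/-- gradient vanishes at a global max -/
lemma grad_zero_at_max {f : Euc d → ℝ} {x₀ : Euc d}
    (hmax : ∀ y, f y ≤ f x₀) : gradient f x₀ = 0 := by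
  have hloc : IsLocalMax f x₀ := Filter.Eventually.of_forall hmax
  rw [gradient, hloc.fderiv_eq_zero]
  simp

/-- laplacian nonpositive at a global max -/
lemma lap_nonpos_at_max {f : Euc d → ℝ} (hf : ContDiff ℝ (⊤ : ℕ∞) f) {x₀ : Euc d}
    (hmax : ∀ y, f y ≤ f x₀) : lap f x₀ ≤ 0 := by
  unfold lap
  apply Finset.sum_nonpos
  intro i _
  exact second_dir_nonpos hf hmax _



/-- embedding of integer vectors -/
def emb (k : Fin d → ℤ) : Euc d := (EuclideanSpace.equiv (Fin d) ℝ).symm (fun i => (k i : ℝ))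

lemma emb_apply (k : Fin d → ℤ) (i : Fin d) : emb k i = (k i : ℝ) := rfl

lemma norm_le_of_coords {x : Euc d} {c : ℝ} (hc : 0 ≤ c) (h : ∀ i, |x i| ≤ c) :
    ‖x‖ ≤ Real.sqrt d * c := by
  rw [EuclideanSpace.norm_eq]
  simp only [Real.norm_eq_abs, sq_abs]
  have : ∑ i, x i ^ 2 ≤ ∑ _i : Fin d, c ^ 2 := by
    apply Finset.sum_le_sum
    intro i _
    calc x i ^ 2 = |x i| ^ 2 := (sq_abs _).symm
    _ ≤ c ^ 2 := by
      apply pow_le_pow_left₀ (abs_nonneg _) (h i)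
  calc Real.sqrt (∑ i, x i ^ 2) ≤ Real.sqrt (∑ _i : Fin d, c ^ 2) := Real.sqrt_le_sqrt this
  _ = Real.sqrt (d * c ^ 2) := by rw [Finset.sum_const]; simp [mul_comm]
  _ = Real.sqrt d * c := by
    rw [Real.sqrt_mul (by positivity), Real.sqrt_sq hc]

/-- a continuous periodic function attains its maximum -/
lemma zper_exists_max {f : Euc d → ℝ} (hf : Continuous f) (hper : ZPer f) :
    ∃ x₀, ∀ y, f y ≤ f x₀ := by
  have hcpt : IsCompact (Metric.closedBall (0 : Euc d) (Real.sqrt d)) :=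
    isCompact_closedBall _ _
  have hne : (Metric.closedBall (0 : Euc d) (Real.sqrt d)).Nonempty :=
    ⟨0, by simp [Real.sqrt_nonneg]⟩
  obtain ⟨x₀, _, hx₀⟩ := hcpt.exists_isMaxOn hne (hf.continuousOn)
  refine ⟨x₀, fun y => ?_⟩
  set k : Fin d → ℤ := fun i => ⌊y i⌋ with hk
  set q : Euc d := y - emb k with hq
  have hyq : y = q + emb k := by simp [hq]
  have h1 : f y = f q := by rw [hyq]; exact hper q k
  have hqball : q ∈ Metric.closedBall (0 : Euc d) (Real.sqrt d) := by
    simp only [Metric.mem_closedBall, dist_zero_right]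
    have := norm_le_of_coords (c := 1) zero_le_one (x := q) ?_
    · simpa using this
    · intro i
      have : q i = Int.fract (y i) := by
        have : q i = y i - (⌊y i⌋ : ℝ) := rfl
        rw [this, Int.fract]
      rw [this, abs_of_nonneg (Int.fract_nonneg _)]
      exact (Int.fract_lt_one _).le
  calc f y = f q := h1
  _ ≤ f x₀ := hx₀ hqball

/-- translation invariance of fderiv for a periodic function -/
lemma fderiv_zper {f : Euc d → ℝ} (hf : Differentiable ℝ f) (hper : ZPer f)
    (x : Euc d) (k : Fin d → ℤ) : fderiv ℝ f (x + emb k) = fderiv ℝ f x := by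
  have heq : (fun y : Euc d => f (y + emb k)) = f := funext fun y => hper y k
  have h1 : HasFDerivAt (fun y : Euc d => f (y + emb k)) (fderiv ℝ f (x + emb k)) x := by
    have h2 : HasFDerivAt (fun y : Euc d => y + emb k)
        (ContinuousLinearMap.id ℝ (Euc d)) x := (hasFDerivAt_id x).add_const _
    have h3 := ((hf (x + emb k)).hasFDerivAt).comp x h2
    exact h3
  rw [heq] at h1
  exact h1.unique (hf x).hasFDerivAt

lemma gradient_zper {f : Euc d → ℝ} (hf : Differentiable ℝ f) (hper : ZPer f)
    (x : Euc d) (k : Fin d → ℤ) : gradient f (x + emb k) = gradient f x := by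
  rw [gradient, gradient, fderiv_zper hf hper x k]

/-- a function with constant gradient equal to `-c` plus periodicity forces `c = 0` -/
lemma const_grad_periodic {f : Euc d → ℝ} (hf : Differentiable ℝ f)
    (hper : ZPer f) (c : Euc d) (hgrad : ∀ y, gradient f y = -c) : c = 0 := by
  set g : Euc d → ℝ := fun y => f y + ⟪c, y⟫ with hg
  have hginner : Differentiable ℝ (fun y : Euc d => ⟪c, y⟫) :=
    (innerSL ℝ c).differentiable
  have hgd : Differentiable ℝ g := hf.add hginner
  have hgrad0 : ∀ y, fderiv ℝ g y = 0 := by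
    intro y
    have h1 : fderiv ℝ g y = fderiv ℝ f y + fderiv ℝ (fun y : Euc d => ⟪c, y⟫) y :=
      fderiv_add (hf y) (hginner y)
    have h2 : fderiv ℝ (fun y : Euc d => ⟪c, y⟫) y = (innerSL ℝ c : Euc d →L[ℝ] ℝ) :=
      (innerSL ℝ c).fderiv
    apply ContinuousLinearMap.ext
    intro v
    have h3 : fderiv ℝ f y v = ⟪gradient f y, v⟫ := by
      rw [gradient]; exact (InnerProductSpace.toDual_symm_apply).symm
    rw [h1]
    simp only [ContinuousLinearMap.add_apply, h2, h3, hgrad y]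
    simp [inner_neg_left]
  have hconst : ∀ x y : Euc d, g x = g y := fun x y =>
    is_const_of_fderiv_eq_zero hgd hgrad0 x y
  -- evaluate on integer vectors
  have hzero : ∀ k : Fin d → ℤ, ⟪c, emb k⟫ = 0 := by
    intro k
    have h1 : g (0 + emb k) = g 0 := hconst _ _
    have h2 : f (0 + emb k) = f 0 := hper 0 k
    simp only [hg, zero_add] at h1 h2
    rw [h2] at h1
    simpa [inner_zero_right] using h1
  -- coordinates of c vanish
  have hcoord : ∀ i : Fin d, c i = 0 := by
    intro i
    have h1 := hzero (fun j => if j = i then 1 else 0)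
    rw [PiLp.inner_apply] at h1
    simp only [emb_apply] at h1
    rw [Finset.sum_eq_single i] at h1
    · simpa using h1
    · intro b _ hb; simp [hb]
    · simp
  apply ext_inner_right ℝ
  intro v
  rw [PiLp.inner_apply]
  simp [hcoord]



/-- the Gaussian bump -/
def gauss (β : ℝ) (ξ : Euc d) : Euc d → ℝ := fun y => Real.exp (-β * ‖y - ξ‖ ^ 2)

lemma gauss_pos (β : ℝ) (ξ y : Euc d) : 0 < gauss β ξ y := Real.exp_pos _

lemma gauss_le_one {β : ℝ} (hβ : 0 ≤ β) (ξ y : Euc d) : gauss β ξ y ≤ 1 := by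
  rw [gauss, ← Real.exp_zero]
  apply Real.exp_le_exp.mpr
  have : 0 ≤ β * ‖y - ξ‖ ^ 2 := by positivity
  linarith

lemma gauss_smooth (β : ℝ) (ξ : Euc d) : ContDiff ℝ (⊤ : ℕ∞) (gauss β ξ) := by
  apply Real.contDiff_exp.comp
  exact contDiff_const.mul ((contDiff_norm_sq ℝ (E := Euc d)).comp (contDiff_id.sub contDiff_const))

lemma gauss_hasFDerivAt (β : ℝ) (ξ x : Euc d) :
    HasFDerivAt (gauss β ξ) ((-2 * β * gauss β ξ x) • (innerSL ℝ (x - ξ))) x := by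
  have h1 : HasFDerivAt (fun y : Euc d => y - ξ) (ContinuousLinearMap.id ℝ (Euc d)) x :=
    (hasFDerivAt_id x).sub_const ξ
  have hexp := (Real.hasDerivAt_exp (-β * ‖x - ξ‖ ^ 2)).comp_hasFDerivAt x
    ((h1.norm_sq).const_mul (-β))
  refine hexp.congr_fderiv ?_
  apply ContinuousLinearMap.ext
  intro v
  simp only [ContinuousLinearMap.smul_apply, innerSL_apply_apply, smul_eq_mul,
    ContinuousLinearMap.comp_apply, ContinuousLinearMap.coe_id', id_eq, two_smul,
    ContinuousLinearMap.add_apply, gauss]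
  ring

lemma gauss_fderiv_apply (β : ℝ) (ξ x v : Euc d) :
    fderiv ℝ (gauss β ξ) x v = (-2 * β * gauss β ξ x) * ⟪x - ξ, v⟫ := by
  rw [(gauss_hasFDerivAt β ξ x).fderiv]
  simp only [ContinuousLinearMap.smul_apply, innerSL_apply_apply, smul_eq_mul]

lemma gauss_gradient (β : ℝ) (ξ x : Euc d) :
    gradient (gauss β ξ) x = (-2 * β * gauss β ξ x) • (x - ξ) := by
  apply ext_inner_right ℝ
  intro v
  rw [gradient, InnerProductSpace.toDual_symm_apply, gauss_fderiv_apply]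
  rw [real_inner_smul_left]

lemma sum_coord_sq (x : Euc d) : ∑ i, x i ^ 2 = ‖x‖ ^ 2 := by
  rw [EuclideanSpace.norm_eq]
  rw [Real.sq_sqrt (by positivity)]
  simp [sq_abs]

lemma inner_single_coord (y : Euc d) (i : Fin d) :
    ⟪y, (EuclideanSpace.single i (1:ℝ) : Euc d)⟫ = y i := by
  rw [EuclideanSpace.inner_single_right]
  simp

lemma gauss_lap (β : ℝ) (ξ x : Euc d) :
    lap (gauss β ξ) x = gauss β ξ x * (4 * β ^ 2 * ‖x - ξ‖ ^ 2 - 2 * β * d) := by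
  unfold lap
  have key : ∀ i : Fin d,
      fderiv ℝ (fun y => fderiv ℝ (gauss β ξ) y (EuclideanSpace.single i 1)) x
        (EuclideanSpace.single i 1)
      = 4 * β ^ 2 * gauss β ξ x * (x i - ξ i) ^ 2 - 2 * β * gauss β ξ x := by
    intro i
    have hip : ∀ y : Euc d, ⟪y - ξ, (EuclideanSpace.single i (1:ℝ) : Euc d)⟫ = y i - ξ i := by
      intro y
      rw [inner_single_coord]
      rfl
    set ℓ : Euc d →L[ℝ] ℝ := EuclideanSpace.proj i with hℓ
    have hℓapp : ∀ y : Euc d, ℓ y = y i := fun y => rfl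
    have heq : (fun y => fderiv ℝ (gauss β ξ) y (EuclideanSpace.single i 1))
        = fun y => (-2 * β) * (gauss β ξ y * (ℓ y - ξ i)) := by
      funext y
      rw [gauss_fderiv_apply, hip y, hℓapp y]
      ring
    rw [heq]
    have hcoord : HasFDerivAt (fun y : Euc d => ℓ y - ξ i) ℓ x :=
      ℓ.hasFDerivAt.sub_const (ξ i)
    have hprod := ((gauss_hasFDerivAt β ξ x).mul hcoord).const_mul (-2 * β)
    rw [(show HasFDerivAt (fun y : Euc d => (-2 * β) * (gauss β ξ y * (ℓ y - ξ i))) _ x from hprod).fderiv]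
    have h1 : ℓ (EuclideanSpace.single i (1:ℝ)) = 1 := by
      rw [hℓapp]
      simp
    have h2 : (innerSL ℝ (x - ξ) : Euc d →L[ℝ] ℝ) (EuclideanSpace.single i (1:ℝ))
        = x i - ξ i := by
      rw [innerSL_apply_apply]
      exact hip x
    simp only [ContinuousLinearMap.smul_apply, ContinuousLinearMap.add_apply,
      smul_eq_mul, h1, h2, hℓapp]
    ring
  rw [Finset.sum_congr rfl (fun i _ => key i)]
  rw [Finset.sum_sub_distrib]
  simp only [Finset.sum_const, Finset.card_univ, Fintype.card_fin, nsmul_eq_mul]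
  have h3 : ∑ i : Fin d, 4 * β ^ 2 * gauss β ξ x * (x i - ξ i) ^ 2
      = 4 * β ^ 2 * gauss β ξ x * ‖x - ξ‖ ^ 2 := by
    rw [← Finset.mul_sum]
    congr 1
    have h4 : ∀ i : Fin d, x i - ξ i = (x - ξ) i := by intro i; rfl
    rw [Finset.sum_congr rfl (fun i _ => by rw [h4 i])]
    exact sum_coord_sq (x - ξ)
  rw [h3]
  ring

/-- the key elliptic estimate for the Gaussian away from its center -/
lemma gauss_est {β B r₀ R : ℝ} (hβ1 : 1 ≤ β) (hB : 0 ≤ B) (hr₀ : 0 < r₀) (hR : 0 < R)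
    (hβ : d + B * R + 1 ≤ 2 * β * r₀ ^ 2)
    {ξ x b : Euc d} (hxlo : r₀ ≤ ‖x - ξ‖) (hxhi : ‖x - ξ‖ ≤ R) (hb : ‖b‖ ≤ B) :
    2 * β * Real.exp (-β * R ^ 2) ≤ lap (gauss β ξ) x - ⟪b, gradient (gauss β ξ) x⟫ := by
  set r := ‖x - ξ‖ with hr
  have hrpos : 0 < r := lt_of_lt_of_le hr₀ hxlo
  have h2b : (0:ℝ) ≤ 2 * β := by linarith
  have hgp := gauss_pos β ξ x
  have hΓ : gauss β ξ x = Real.exp (-β * r ^ 2) := rfl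
  have hr2 : r ^ 2 ≤ R ^ 2 := by nlinarith
  have hγlo : Real.exp (-β * R ^ 2) ≤ gauss β ξ x := by
    rw [hΓ]
    apply Real.exp_le_exp.mpr
    nlinarith
  have habs := abs_real_inner_le_norm b (x - ξ)
  have hBr : ‖b‖ * ‖x - ξ‖ ≤ B * r := by
    rw [← hr]
    exact mul_le_mul hb le_rfl (norm_nonneg _) hB
  have habs' : |⟪b, x - ξ⟫| ≤ B * r := le_trans habs hBr
  have hlow : -(B * r) ≤ ⟪b, x - ξ⟫ := (abs_le.mp habs').1
  have hinner : ⟪b, gradient (gauss β ξ) x⟫ ≤ 2 * β * gauss β ξ x * (B * r) := by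
    rw [gauss_gradient, real_inner_smul_right]
    have h0 : 0 ≤ 2 * β * gauss β ξ x * (B * r + ⟪b, x - ξ⟫) :=
      mul_nonneg (by nlinarith) (by linarith)
    nlinarith
  have hkey : 1 ≤ 2 * β * r ^ 2 - d - B * r := by
    have h5 : r₀ ^ 2 ≤ r ^ 2 := by nlinarith
    have h6 : B * r ≤ B * R := mul_le_mul_of_nonneg_left hxhi hB
    nlinarith [mul_le_mul_of_nonneg_left h5 h2b]
  have hA1 : 2 * β * Real.exp (-β * R ^ 2) ≤ 2 * β * gauss β ξ x :=
    mul_le_mul_of_nonneg_left hγlo h2b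
  have h2bg : (0:ℝ) ≤ 2 * β * gauss β ξ x := by nlinarith
  have hA2 : 2 * β * gauss β ξ x * 1 ≤ 2 * β * gauss β ξ x * (2 * β * r ^ 2 - d - B * r) :=
    mul_le_mul_of_nonneg_left hkey h2bg
  have hexpand : gauss β ξ x * (4 * β ^ 2 * r ^ 2 - 2 * β * d)
      - 2 * β * gauss β ξ x * (B * r)
      = 2 * β * gauss β ξ x * (2 * β * r ^ 2 - d - B * r) := by ring
  rw [gauss_lap, ← hr]
  linarith


lemma combo_norm_sq {E : Type*} [NormedAddCommGroup E] [InnerProductSpace ℝ E]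
    (θ : ℝ) (a b : E) :
    θ * ‖a‖ ^ 2 + (1 - θ) * ‖b‖ ^ 2
      = ‖θ • a + (1 - θ) • b‖ ^ 2 + θ * (1 - θ) * ‖a - b‖ ^ 2 := by
  have h1 : ∀ z : E, ‖z‖ ^ 2 = @inner ℝ _ _ z z := fun z => (real_inner_self_eq_norm_sq z).symm
  rw [h1, h1, h1, h1]
  simp only [inner_add_left, inner_add_right, inner_sub_left, inner_sub_right,
    real_inner_smul_left, real_inner_smul_right]
  rw [real_inner_comm b a]
  ring

/-- The core comparison computation at a maximum point of the perturbed difference. -/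
lemma core {ψ c n : Euc d → ℝ} (hψ : ContDiff ℝ (⊤ : ℕ∞) ψ) (hcpos : ∀ y, 0 < c y)
    {θ : ℝ} (hθ0 : 0 < θ) (hθ1 : θ < 1)
    {p₁ p₂ pb : Euc d} (hpb : pb = θ • p₁ + (1 - θ) • p₂)
    {u1 u2 v1 v2 w1 w2 : Euc d → ℝ} {l1 l2 lb : ℝ}
    (hu1 : ContDiff ℝ (⊤ : ℕ∞) u1) (hv1 : ContDiff ℝ (⊤ : ℕ∞) v1)
    (hw1 : ContDiff ℝ (⊤ : ℕ∞) w1)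
    (hequ : ∀ y, -lap u1 y + ‖gradient u1 y + p₁‖ ^ 2
      - (@inner ℝ _ _ (gradient ψ y) (gradient u1 y + p₁)) + lap ψ y
      + c y * Real.exp (u1 y - u2 y) = n y + l1)
    (heqv : ∀ y, -lap v1 y + ‖gradient v1 y + p₂‖ ^ 2
      - (@inner ℝ _ _ (gradient ψ y) (gradient v1 y + p₂)) + lap ψ y
      + c y * Real.exp (v1 y - v2 y) = n y + l2)
    (heqw : ∀ y, -lap w1 y + ‖gradient w1 y + pb‖ ^ 2
      - (@inner ℝ _ _ (gradient ψ y) (gradient w1 y + pb)) + lap ψ y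
      + c y * Real.exp (w1 y - w2 y) = n y + lb)
    {Γ : Euc d → ℝ} (hΓ : ContDiff ℝ (⊤ : ℕ∞) Γ) {κ : ℝ}
    {x₀ : Euc d}
    (hmax : ∀ y, θ * u1 y + (1 - θ) * v1 y - w1 y + κ * Γ y
      ≤ θ * u1 x₀ + (1 - θ) * v1 x₀ - w1 x₀ + κ * Γ x₀) :
    κ * (lap Γ x₀ - @inner ℝ _ _ ((2:ℝ) • (gradient w1 x₀ + pb) - gradient ψ x₀)
        (gradient Γ x₀))
      + θ * (1 - θ) * ‖gradient u1 x₀ - gradient v1 x₀ + (p₁ - p₂)‖ ^ 2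
      + c x₀ * (Real.exp (θ * (u1 x₀ - u2 x₀) + (1 - θ) * (v1 x₀ - v2 x₀))
          - Real.exp (w1 x₀ - w2 x₀))
      ≤ θ * l1 + (1 - θ) * l2 - lb := by
  have hdu1 := hu1.differentiable (by simp)
  have hdv1 := hv1.differentiable (by simp)
  have hdw1 := hw1.differentiable (by simp)
  have hdΓ := hΓ.differentiable (by simp)
  set A := gradient u1 x₀ with hA
  set Bv := gradient v1 x₀ with hBv
  set W := gradient w1 x₀ with hW
  set G := gradient Γ x₀ with hG
  set S := gradient ψ x₀ with hS
  -- first order condition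
  have hgradF : gradient (fun y => θ * u1 y + (1 - θ) * v1 y - w1 y + κ * Γ y) x₀
      = θ • A + (1 - θ) • Bv - W + κ • G :=
    grad_comb4 (hdu1 x₀) (hdv1 x₀) (hdw1 x₀) (hdΓ x₀) θ (1 - θ) κ 0
  have hgrad0 : θ • A + (1 - θ) • Bv - W + κ • G = 0 := by
    rw [← hgradF]
    exact grad_zero_at_max hmax
  have hcomb : θ • (A + p₁) + (1 - θ) • (Bv + p₂) = (W + pb) - κ • G := by
    rw [hpb]
    linear_combination (norm := module) hgrad0
  -- second order condition
  have hFsmooth : ContDiff ℝ (⊤ : ℕ∞) (fun y => θ * u1 y + (1 - θ) * v1 y - w1 y + κ * Γ y) :=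
    (((contDiff_const.mul hu1).add (contDiff_const.mul hv1)).sub hw1).add (contDiff_const.mul hΓ)
  have hlapF : lap (fun y => θ * u1 y + (1 - θ) * v1 y - w1 y + κ * Γ y) x₀
      = θ * lap u1 x₀ + (1 - θ) * lap v1 x₀ - lap w1 x₀ + κ * lap Γ x₀ :=
    lap_comb4 hu1 hv1 hw1 hΓ θ (1 - θ) κ 0
  have hlap : θ * lap u1 x₀ + (1 - θ) * lap v1 x₀ - lap w1 x₀ ≤ -(κ * lap Γ x₀) := by
    have := lap_nonpos_at_max hFsmooth hmax
    rw [hlapF] at this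
    linarith
  -- quadratic terms
  have hab : (A + p₁) - (Bv + p₂) = A - Bv + (p₁ - p₂) := by abel
  have hnorm2 : ‖(W + pb) - κ • G‖ ^ 2
      = ‖W + pb‖ ^ 2 - 2 * (κ * @inner ℝ _ _ (W + pb) G) + κ ^ 2 * ‖G‖ ^ 2 := by
    rw [norm_sub_sq_real, real_inner_smul_right, norm_smul]
    simp only [Real.norm_eq_abs, mul_pow, sq_abs]
  have hq : θ * ‖A + p₁‖ ^ 2 + (1 - θ) * ‖Bv + p₂‖ ^ 2
      = ‖W + pb‖ ^ 2 - 2 * (κ * @inner ℝ _ _ (W + pb) G) + κ ^ 2 * ‖G‖ ^ 2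
        + θ * (1 - θ) * ‖A - Bv + (p₁ - p₂)‖ ^ 2 := by
    rw [combo_norm_sq θ (A + p₁) (Bv + p₂), hcomb, hnorm2, hab]
  -- inner product with gradient of ψ
  have hSterm : θ * @inner ℝ _ _ S (A + p₁) + (1 - θ) * @inner ℝ _ _ S (Bv + p₂)
      = @inner ℝ _ _ S (W + pb) - κ * @inner ℝ _ _ S G := by
    rw [← real_inner_smul_right, ← real_inner_smul_right, ← inner_add_right, hcomb,
      inner_sub_right, real_inner_smul_right]
  -- convexity of exp
  have hexp1 : Real.exp (θ * (u1 x₀ - u2 x₀) + (1 - θ) * (v1 x₀ - v2 x₀))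
      ≤ θ * Real.exp (u1 x₀ - u2 x₀) + (1 - θ) * Real.exp (v1 x₀ - v2 x₀) := by
    have h := convexOn_exp.2 (mem_univ (u1 x₀ - u2 x₀)) (mem_univ (v1 x₀ - v2 x₀))
      (le_of_lt hθ0) (by linarith : (0:ℝ) ≤ 1 - θ) (by ring : θ + (1 - θ) = 1)
    simpa [smul_eq_mul] using h
  have hcx : c x₀ * Real.exp (θ * (u1 x₀ - u2 x₀) + (1 - θ) * (v1 x₀ - v2 x₀))
      ≤ c x₀ * (θ * Real.exp (u1 x₀ - u2 x₀) + (1 - θ) * Real.exp (v1 x₀ - v2 x₀)) :=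
    mul_le_mul_of_nonneg_left hexp1 (hcpos x₀).le
  -- the combined equation
  have hE : θ * l1 + (1 - θ) * l2 - lb
      = -(θ * lap u1 x₀ + (1 - θ) * lap v1 x₀ - lap w1 x₀)
        + (θ * ‖A + p₁‖ ^ 2 + (1 - θ) * ‖Bv + p₂‖ ^ 2 - ‖W + pb‖ ^ 2)
        - (θ * @inner ℝ _ _ S (A + p₁) + (1 - θ) * @inner ℝ _ _ S (Bv + p₂)
            - @inner ℝ _ _ S (W + pb))
        + c x₀ * (θ * Real.exp (u1 x₀ - u2 x₀) + (1 - θ) * Real.exp (v1 x₀ - v2 x₀)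
            - Real.exp (w1 x₀ - w2 x₀)) := by
    have E1 := hequ x₀
    have E2 := heqv x₀
    have E3 := heqw x₀
    simp only [← hA, ← hBv, ← hW, ← hS] at E1 E2 E3
    linear_combination E3 - θ * E1 - (1 - θ) * E2
  have hSG : @inner ℝ _ _ ((2:ℝ) • (W + pb) - S) G
      = 2 * @inner ℝ _ _ (W + pb) G - @inner ℝ _ _ S G := by
    rw [inner_sub_left, real_inner_smul_left]
  have hG2 : 0 ≤ κ ^ 2 * ‖G‖ ^ 2 := by positivity
  rw [hSG]
  linarith [hE, hq, hSterm, hlap, hcx, hG2]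


lemma lap_const (c₀ : ℝ) (x : Euc d) : lap (fun _ : Euc d => c₀) x = 0 := by
  unfold lap
  have h1 : (fun y : Euc d => fderiv ℝ (fun _ : Euc d => c₀) y) = fun _ => 0 := by
    funext y
    exact fderiv_const_apply c₀
  apply Finset.sum_eq_zero
  intro i _
  have h2 : (fun y : Euc d => fderiv ℝ (fun _ : Euc d => c₀) y (EuclideanSpace.single i 1))
      = fun _ : Euc d => (0:ℝ) := by
    funext y
    rw [fderiv_const_apply]
    rfl
  rw [h2, fderiv_const_apply]
  rfl

lemma grad_continuous {f : Euc d → ℝ} (hf : ContDiff ℝ (⊤ : ℕ∞) f) :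
    Continuous (fun y => gradient f y) := by
  have h1 : Continuous (fderiv ℝ f) := hf.continuous_fderiv (by simp)
  have h2 : Continuous (InnerProductSpace.toDual ℝ (Euc d)).symm :=
    (InnerProductSpace.toDual ℝ (Euc d)).symm.continuous
  exact h2.comp h1

/-- endgame : if the gradients of two periodic functions differ by a constant, it is zero -/
lemma grad_diff_const {u v : Euc d → ℝ} (hu : Differentiable ℝ u) (hv : Differentiable ℝ v)
    (huper : ZPer u) (hvper : ZPer v) (c : Euc d)
    (h : ∀ y, gradient u y - gradient v y + c = 0) : c = 0 := by
  set g : Euc d → ℝ := fun y => u y - v y + @inner ℝ _ _ c y with hg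
  have hginner : Differentiable ℝ (fun y : Euc d => @inner ℝ _ _ c y) :=
    (innerSL ℝ c).differentiable
  have hgd : Differentiable ℝ g := ((hu.sub hv).add hginner)
  have hgrad0 : ∀ y, fderiv ℝ g y = 0 := by
    intro y
    have h1 : fderiv ℝ g y = fderiv ℝ (fun z => u z - v z) y
        + fderiv ℝ (fun z : Euc d => @inner ℝ _ _ c z) y :=
      fderiv_add ((hu y).sub (hv y)) (hginner y)
    have h1' : fderiv ℝ (fun z => u z - v z) y = fderiv ℝ u y - fderiv ℝ v y :=
      fderiv_sub (hu y) (hv y)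
    have h2 : fderiv ℝ (fun z : Euc d => @inner ℝ _ _ c z) y = (innerSL ℝ c : Euc d →L[ℝ] ℝ) :=
      (innerSL ℝ c).fderiv
    apply ContinuousLinearMap.ext
    intro z
    have h3 : ∀ (f : Euc d → ℝ), fderiv ℝ f y z = @inner ℝ _ _ (gradient f y) z := by
      intro f
      rw [gradient]
      exact (InnerProductSpace.toDual_symm_apply).symm
    rw [h1, h1']
    simp only [ContinuousLinearMap.add_apply, ContinuousLinearMap.sub_apply, h2, innerSL_apply_apply,
      h3 u, h3 v]
    have h4 := h y
    have h5 : @inner ℝ _ _ (gradient u y - gradient v y + c) z = (0:ℝ) := by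
      rw [h4, inner_zero_left]
    rw [inner_add_left, inner_sub_left] at h5
    simp only [ContinuousLinearMap.zero_apply]
    linarith
  have hconst : ∀ x y : Euc d, g x = g y := fun x y =>
    is_const_of_fderiv_eq_zero hgd hgrad0 x y
  have hzero : ∀ k : Fin d → ℤ, @inner ℝ _ _ c (emb k) = 0 := by
    intro k
    have h1 : g (0 + emb k) = g 0 := hconst _ _
    have h2 : u (0 + emb k) = u 0 := huper 0 k
    have h3 : v (0 + emb k) = v 0 := hvper 0 k
    simp only [hg, zero_add] at h1 h2 h3
    rw [h2, h3] at h1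
    have h4 : @inner ℝ _ _ c (0 : Euc d) = (0:ℝ) := inner_zero_right c
    linarith [h1, h4]
  have hcoord : ∀ i : Fin d, c i = 0 := by
    intro i
    have h1 := hzero (fun j => if j = i then 1 else 0)
    rw [PiLp.inner_apply] at h1
    simp only [emb_apply] at h1
    rw [Finset.sum_eq_single i] at h1
    · simpa using h1
    · intro b _ hb; simp [hb]
    · simp
  apply ext_inner_right ℝ
  intro z
  rw [PiLp.inner_apply]
  simp [hcoord]


end StrictCvx

set_option maxHeartbeats 2000000

open StrictCvx

/-- **Lemma 2.1.** The effective Hamiltonian `H̄` is strictly convex. -/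
theorem effective_hamiltonian_strictly_convex
    {d : ℕ} (hd : 1 ≤ d) (ψ ν1 ν2 : Euc d → ℝ) (hdata : GoodData ψ ν1 ν2)
    (Hbar : Euc d → ℝ)
    (hHbar : ∀ (p : Euc d) (lam : ℝ),
      (∃ φ1 φ2 : Euc d → ℝ, IsCellSol ψ ν1 ν2 p lam φ1 φ2) ↔ lam = Hbar p) :
    ∀ p₁ p₂ : Euc d, p₁ ≠ p₂ → ∀ θ : ℝ, 0 < θ → θ < 1 →
      Hbar (θ • p₁ + (1 - θ) • p₂) < θ * Hbar p₁ + (1 - θ) * Hbar p₂ := by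
  classical
  obtain ⟨hψ, hν1, hν2, hψper, hν1per, hν2per, hν1pos, hν2pos⟩ := hdata
  intro p₁ p₂ hp θ hθ0 hθ1
  obtain ⟨u1, u2, hu⟩ := (hHbar p₁ (Hbar p₁)).mpr rfl
  obtain ⟨v1, v2, hv⟩ := (hHbar p₂ (Hbar p₂)).mpr rfl
  obtain ⟨w1, w2, hw⟩ :=
    (hHbar (θ • p₁ + (1 - θ) • p₂) (Hbar (θ • p₁ + (1 - θ) • p₂))).mpr rfl
  set pb : Euc d := θ • p₁ + (1 - θ) • p₂ with hpb
  obtain ⟨hu1s, hu2s, hu1per, hu2per, hequ1, hequ2⟩ := hu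
  obtain ⟨hv1s, hv2s, hv1per, hv2per, heqv1, heqv2⟩ := hv
  obtain ⟨hw1s, hw2s, hw1per, hw2per, heqw1, heqw2⟩ := hw
  by_contra hcon
  push_neg at hcon
  have hcomb0 : θ * Hbar p₁ + (1 - θ) * Hbar p₂ - Hbar pb ≤ 0 := by linarith
  -- second equations rewritten with a zero potential
  have hψ0s : ContDiff ℝ (⊤ : ℕ∞) (fun _ : Euc d => (0:ℝ)) := contDiff_const
  have hequ2' : ∀ y, -lap u2 y + ‖gradient u2 y + p₁‖ ^ 2
      - (@inner ℝ _ _ (gradient (fun _ : Euc d => (0:ℝ)) y) (gradient u2 y + p₁))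
      + lap (fun _ : Euc d => (0:ℝ)) y
      + ν1 y * Real.exp (u2 y - u1 y) = ν2 y + Hbar p₁ := by
    intro y
    rw [gradient_fun_const, lap_const, inner_zero_left]
    linear_combination hequ2 y
  have heqv2' : ∀ y, -lap v2 y + ‖gradient v2 y + p₂‖ ^ 2
      - (@inner ℝ _ _ (gradient (fun _ : Euc d => (0:ℝ)) y) (gradient v2 y + p₂))
      + lap (fun _ : Euc d => (0:ℝ)) y
      + ν1 y * Real.exp (v2 y - v1 y) = ν2 y + Hbar p₂ := by
    intro y
    rw [gradient_fun_const, lap_const, inner_zero_left]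
    linear_combination heqv2 y
  have heqw2' : ∀ y, -lap w2 y + ‖gradient w2 y + pb‖ ^ 2
      - (@inner ℝ _ _ (gradient (fun _ : Euc d => (0:ℝ)) y) (gradient w2 y + pb))
      + lap (fun _ : Euc d => (0:ℝ)) y
      + ν1 y * Real.exp (w2 y - w1 y) = ν2 y + Hbar pb := by
    intro y
    rw [gradient_fun_const, lap_const, inner_zero_left]
    linear_combination heqw2 y
  -- the two comparison functions and their maximum
  set h1 : Euc d → ℝ := fun y => θ * u1 y + (1 - θ) * v1 y - w1 y with hh1def
  set h2 : Euc d → ℝ := fun y => θ * u2 y + (1 - θ) * v2 y - w2 y with hh2def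
  have topcast : ((⊤ : ℕ∞) : WithTop ℕ∞) ≠ 0 := by simp
  have hdu1 : Differentiable ℝ u1 := hu1s.differentiable (by simp)
  have hdv1 : Differentiable ℝ v1 := hv1s.differentiable (by simp)
  have hdw1 : Differentiable ℝ w1 := hw1s.differentiable (by simp)
  have hdw2 : Differentiable ℝ w2 := hw2s.differentiable (by simp)
  have hdψ : Differentiable ℝ ψ := hψ.differentiable (by simp)
  have hh1cont : Continuous h1 :=
    ((continuous_const.mul hu1s.continuous).add
      (continuous_const.mul hv1s.continuous)).sub hw1s.continuous
  have hh2cont : Continuous h2 :=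
    ((continuous_const.mul hu2s.continuous).add
      (continuous_const.mul hv2s.continuous)).sub hw2s.continuous
  set H : Euc d → ℝ := fun y => max (h1 y) (h2 y) with hHdef
  have hHcont : Continuous H := hh1cont.max hh2cont
  have hh1per : ZPer h1 := by
    intro x k
    simp only [hh1def]
    rw [hu1per x k, hv1per x k, hw1per x k]
  have hh2per : ZPer h2 := by
    intro x k
    simp only [hh2def]
    rw [hu2per x k, hv2per x k, hw2per x k]
  have hHper : ZPer H := by
    intro x k
    simp only [hHdef]
    rw [hh1per x k, hh2per x k]
  obtain ⟨xM, hxM⟩ := zper_exists_max hHcont hHper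
  -- relation between h1, h2 and the exponential terms
  have hh1eval : ∀ z, h1 z = θ * u1 z + (1 - θ) * v1 z - w1 z := fun z => rfl
  have hh2eval : ∀ z, h2 z = θ * u2 z + (1 - θ) * v2 z - w2 z := fun z => rfl
  by_cases hA : ∀ z, H z = H xM
  · -- case: the maximum is attained everywhere
    -- first: index 1 always achieves the maximum
    have hclaim : ∀ y, h2 y ≤ h1 y := by
      intro y
      by_contra hcon2
      push_neg at hcon2
      -- h1 y < h2 y, so h2 attains its global max at y; apply the swapped core lemma
      have hytop : ∀ z, h2 z ≤ h2 y := by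
        intro z
        calc h2 z ≤ H z := le_max_right _ _
        _ = H xM := hA z
        _ = H y := (hA y).symm
        _ = h2 y := max_eq_right hcon2.le
      have hmax0 : ∀ z, θ * u2 z + (1 - θ) * v2 z - w2 z + 0 * gauss 1 0 z
          ≤ θ * u2 y + (1 - θ) * v2 y - w2 y + 0 * gauss 1 0 y := by
        intro z
        have := hytop z
        rw [hh2eval z, hh2eval y] at this
        simpa using this
      have hcore := core hψ0s hν1pos hθ0 hθ1 hpb hu2s hv2s hw2s
        hequ2' heqv2' heqw2' (gauss_smooth 1 0) hmax0
      simp only [zero_mul, zero_add] at hcore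
      have hstrict : 0 < ν1 y * (Real.exp (θ * (u2 y - u1 y) + (1 - θ) * (v2 y - v1 y))
          - Real.exp (w2 y - w1 y)) := by
        apply mul_pos (hν1pos y)
        have hlt : w2 y - w1 y < θ * (u2 y - u1 y) + (1 - θ) * (v2 y - v1 y) := by
          have h5 : h1 y < h2 y := hcon2
          rw [hh1eval y, hh2eval y] at h5
          nlinarith [h5]
        have := Real.exp_lt_exp.mpr hlt
        linarith
      have hq0 : 0 ≤ θ * (1 - θ) * ‖gradient u2 y - gradient v2 y + (p₁ - p₂)‖ ^ 2 := by
        have : (0:ℝ) < θ * (1 - θ) := by nlinarith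
        positivity
      linarith [hcore, hstrict, hq0, hcomb0]
    -- now run the comparison at every point with index 1
    have hgradeq : ∀ y, gradient u1 y - gradient v1 y + (p₁ - p₂) = 0 := by
      intro y
      have hytop : ∀ z, h1 z ≤ h1 y := by
        intro z
        calc h1 z ≤ H z := le_max_left _ _
        _ = H xM := hA z
        _ = H y := (hA y).symm
        _ = h1 y := max_eq_left (hclaim y)
      have hmax0 : ∀ z, θ * u1 z + (1 - θ) * v1 z - w1 z + 0 * gauss 1 0 z
          ≤ θ * u1 y + (1 - θ) * v1 y - w1 y + 0 * gauss 1 0 y := by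
        intro z
        have := hytop z
        rw [hh1eval z, hh1eval y] at this
        simpa using this
      have hcore := core hψ hν2pos hθ0 hθ1 hpb hu1s hv1s hw1s
        hequ1 heqv1 heqw1 (gauss_smooth 1 0) hmax0
      simp only [zero_mul, zero_add] at hcore
      have hterm : 0 ≤ ν2 y * (Real.exp (θ * (u1 y - u2 y) + (1 - θ) * (v1 y - v2 y))
          - Real.exp (w1 y - w2 y)) := by
        apply mul_nonneg (hν2pos y).le
        have hge : w1 y - w2 y ≤ θ * (u1 y - u2 y) + (1 - θ) * (v1 y - v2 y) := by
          have h5 : h2 y ≤ h1 y := hclaim y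
          rw [hh1eval y, hh2eval y] at h5
          nlinarith [h5]
        have := Real.exp_le_exp.mpr hge
        linarith
      have hq2 : θ * (1 - θ) * ‖gradient u1 y - gradient v1 y + (p₁ - p₂)‖ ^ 2 ≤ 0 := by
        linarith [hcore, hterm, hcomb0]
      have hθθ : (0:ℝ) < θ * (1 - θ) := by nlinarith
      have hn2 : ‖gradient u1 y - gradient v1 y + (p₁ - p₂)‖ ^ 2 ≤ 0 := by
        by_contra hpos
        push_neg at hpos
        nlinarith [hq2, hθθ, hpos]
      have hn0 : ‖gradient u1 y - gradient v1 y + (p₁ - p₂)‖ = 0 := by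
        have := sq_nonneg ‖gradient u1 y - gradient v1 y + (p₁ - p₂)‖
        nlinarith [norm_nonneg (gradient u1 y - gradient v1 y + (p₁ - p₂))]
      exact norm_eq_zero.mp hn0
    have hc0 := grad_diff_const hdu1 hdv1 hu1per hv1per (p₁ - p₂) hgradeq
    exact hp (by rwa [sub_eq_zero] at hc0)
  · -- case: the maximum is not attained everywhere
    push_neg at hA
    obtain ⟨ξ, hξ⟩ := hA
    have hξlt : H ξ < H xM := lt_of_le_of_ne (hxM ξ) hξ
    set M := H xM with hMdef
    set ρ := M - H ξ with hρdef
    have hρpos : 0 < ρ := by simp only [hρdef]; linarith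
    -- a small ball around ξ where H stays below M - ρ/2
    obtain ⟨r, hrpos, hballr⟩ := Metric.continuousAt_iff.mp hHcont.continuousAt (ρ/2)
      (by positivity)
    set r₀ : ℝ := min (r/2) 1 with hr₀def
    have hr₀pos : 0 < r₀ := lt_min (by positivity) one_pos
    have hupper : ∀ y ∈ Metric.closedBall ξ r₀, H y ≤ M - ρ/2 := by
      intro y hy
      have hdist : dist y ξ < r := by
        have h6 := Metric.mem_closedBall.mp hy
        have h7 : r₀ ≤ r/2 := min_le_left _ _
        linarith
      have h8 := hballr hdist
      rw [Real.dist_eq] at h8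
      have h9 := (abs_lt.mp h8).2
      have h10 : H ξ = M - ρ := by simp only [hρdef]; ring
      linarith
    -- a uniform bound for the drift terms
    have hcw1 : Continuous (fun y : Euc d => gradient w1 y + pb) :=
      (grad_continuous hw1s).add continuous_const
    have hcw2 : Continuous (fun y : Euc d => gradient w2 y + pb) :=
      (grad_continuous hw2s).add continuous_const
    have hcb1 : Continuous (fun y : Euc d => (2:ℝ) • (gradient w1 y + pb) - gradient ψ y) :=
      (hcw1.const_smul (2:ℝ)).sub (grad_continuous hψ)
    have hcb2 : Continuous (fun y : Euc d => (2:ℝ) • (gradient w2 y + pb)) :=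
      hcw2.const_smul (2:ℝ)
    have hBfcont : Continuous (fun y => max ‖(2:ℝ) • (gradient w1 y + pb) - gradient ψ y‖
        ‖(2:ℝ) • (gradient w2 y + pb)‖) := (hcb1.norm).max (hcb2.norm)
    have hBfper : ZPer (fun y => max ‖(2:ℝ) • (gradient w1 y + pb) - gradient ψ y‖
        ‖(2:ℝ) • (gradient w2 y + pb)‖) := by
      intro x k
      have he : (EuclideanSpace.equiv (Fin d) ℝ).symm (fun i => ((k i : ℝ))) = emb k := rfl
      beta_reduce
      rw [he, gradient_zper hdw1 hw1per x k, gradient_zper hdw2 hw2per x k,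
        gradient_zper hdψ hψper x k]
    obtain ⟨xB, hxB⟩ := zper_exists_max hBfcont hBfper
    set B := max (max ‖(2:ℝ) • (gradient w1 xB + pb) - gradient ψ xB‖
        ‖(2:ℝ) • (gradient w2 xB + pb)‖) 0 with hBdef
    have hBnonneg : 0 ≤ B := le_max_right _ _
    have hb1le : ∀ y, ‖(2:ℝ) • (gradient w1 y + pb) - gradient ψ y‖ ≤ B := by
      intro y
      calc ‖(2:ℝ) • (gradient w1 y + pb) - gradient ψ y‖
          ≤ max ‖(2:ℝ) • (gradient w1 y + pb) - gradient ψ y‖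
            ‖(2:ℝ) • (gradient w2 y + pb)‖ := le_max_left _ _
      _ ≤ max ‖(2:ℝ) • (gradient w1 xB + pb) - gradient ψ xB‖
            ‖(2:ℝ) • (gradient w2 xB + pb)‖ := hxB y
      _ ≤ B := le_max_left _ _
    have hb2le : ∀ y, ‖(2:ℝ) • (gradient w2 y + pb)‖ ≤ B := by
      intro y
      calc ‖(2:ℝ) • (gradient w2 y + pb)‖
          ≤ max ‖(2:ℝ) • (gradient w1 y + pb) - gradient ψ y‖
            ‖(2:ℝ) • (gradient w2 y + pb)‖ := le_max_right _ _
      _ ≤ max ‖(2:ℝ) • (gradient w1 xB + pb) - gradient ψ xB‖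
            ‖(2:ℝ) • (gradient w2 xB + pb)‖ := hxB y
      _ ≤ B := le_max_left _ _
    -- parameters
    set R : ℝ := Real.sqrt d + 1 with hRdef
    have hRpos : 0 < R := by
      have := Real.sqrt_nonneg (d:ℝ)
      simp only [hRdef]
      linarith
    set β : ℝ := max 1 (((d:ℝ) + B * R + 1) / (2 * r₀ ^ 2)) with hβdef
    have hβ1 : 1 ≤ β := le_max_left _ _
    have hβpos : 0 < β := by linarith
    have hβkey : (d:ℝ) + B * R + 1 ≤ 2 * β * r₀ ^ 2 := by
      have h1 : ((d:ℝ) + B * R + 1) / (2 * r₀ ^ 2) ≤ β := le_max_right _ _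
      have h2 : (0:ℝ) < 2 * r₀ ^ 2 := by positivity
      rw [div_le_iff₀ h2] at h1
      linarith
    set κ := ρ / 4 with hκdef
    have hκpos : 0 < κ := by positivity
    -- translate the max point near ξ
    set k0 : Fin d → ℤ := fun i => round (ξ i - xM i) with hk0def
    set astar : Euc d := xM + emb k0 with hastardef
    have hasH : H astar = M := by
      simp only [hastardef]
      have he : emb k0 = (EuclideanSpace.equiv (Fin d) ℝ).symm (fun i => ((k0 i : ℝ))) := rfl
      rw [he]
      exact hHper xM k0
    have hascoord : ∀ i, |(astar - ξ) i| ≤ (1:ℝ)/2 := by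
      intro i
      have h1 : (astar - ξ) i = xM i + (k0 i : ℝ) - ξ i := rfl
      rw [h1]
      have h2 : xM i + (k0 i : ℝ) - ξ i = -((ξ i - xM i) - round (ξ i - xM i)) := by
        simp only [hk0def]
        ring
      rw [h2, abs_neg]
      exact abs_sub_round (ξ i - xM i)
    have hasnorm : ‖astar - ξ‖ ≤ Real.sqrt d * (1/2) :=
      norm_le_of_coords (by norm_num) hascoord
    have hasR : astar ∈ Metric.closedBall ξ R := by
      rw [Metric.mem_closedBall, dist_eq_norm]
      have := Real.sqrt_nonneg (d:ℝ)
      simp only [hRdef]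
      linarith
    have hγas : Real.exp (-β * d) ≤ gauss β ξ astar := by
      rw [gauss]
      apply Real.exp_le_exp.mpr
      have h1 : ‖astar - ξ‖ ^ 2 ≤ (d:ℝ) := by
        have h2 : Real.sqrt d * (1/2) ≥ 0 := by positivity
        have h3 : (Real.sqrt d * (1/2)) ^ 2 = (d:ℝ) / 4 := by
          rw [mul_pow, Real.sq_sqrt (by positivity : (0:ℝ) ≤ (d:ℝ))]
          ring
        nlinarith [norm_nonneg (astar - ξ), hasnorm]
      nlinarith [hβpos]
    -- maximize H + κ Γ over the big ball
    obtain ⟨x₀, hx₀K, hx₀max⟩ := (isCompact_closedBall ξ R).exists_isMaxOn ⟨astar, hasR⟩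
      ((hHcont.add (continuous_const.mul (gauss_smooth β ξ).continuous)).continuousOn
        (s := Metric.closedBall ξ R))
    have hmaxK : ∀ y ∈ Metric.closedBall ξ R,
        H y + κ * gauss β ξ y ≤ H x₀ + κ * gauss β ξ x₀ := fun y hy => hx₀max hy
    have hvalastar : M + κ * Real.exp (-β * d) ≤ H x₀ + κ * gauss β ξ x₀ := by
      have h1 := hmaxK astar hasR
      have h2 : κ * Real.exp (-β * d) ≤ κ * gauss β ξ astar :=
        mul_le_mul_of_nonneg_left hγas hκpos.le
      rw [hasH] at h1
      linarith
    have hFglobal : ∀ y, H y + κ * gauss β ξ y ≤ H x₀ + κ * gauss β ξ x₀ := by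
      intro y
      by_cases hy : y ∈ Metric.closedBall ξ R
      · exact hmaxK y hy
      · have hdist : R < ‖y - ξ‖ := by
          rw [Metric.mem_closedBall, dist_eq_norm, not_le] at hy
          exact hy
        have hgs : gauss β ξ y ≤ Real.exp (-β * R ^ 2) := by
          rw [gauss]
          apply Real.exp_le_exp.mpr
          have hsq : R ^ 2 ≤ ‖y - ξ‖ ^ 2 := by nlinarith [hdist, hRpos]
          have hmul : β * R ^ 2 ≤ β * ‖y - ξ‖ ^ 2 :=
            mul_le_mul_of_nonneg_left hsq (by linarith)
          linarith
        have hRd : (d:ℝ) < R ^ 2 := by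
          have h1 : Real.sqrt d ^ 2 = (d:ℝ) := Real.sq_sqrt (by positivity)
          simp only [hRdef]
          nlinarith [Real.sqrt_nonneg (d:ℝ)]
        have hexplt : Real.exp (-β * R ^ 2) < Real.exp (-β * d) := by
          apply Real.exp_lt_exp.mpr
          nlinarith [hβpos]
        have h3 : H y ≤ M := hxM y
        have h4 : κ * gauss β ξ y ≤ κ * Real.exp (-β * R ^ 2) :=
          mul_le_mul_of_nonneg_left hgs hκpos.le
        have h5 : κ * Real.exp (-β * R ^ 2) < κ * Real.exp (-β * d) :=
          (mul_lt_mul_iff_right₀ hκpos).mpr hexplt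
        linarith [hvalastar]
    have hx₀out : x₀ ∉ Metric.closedBall ξ r₀ := by
      intro hmem
      have h1 : H x₀ ≤ M - ρ/2 := hupper x₀ hmem
      have h2 : gauss β ξ x₀ ≤ 1 := gauss_le_one hβpos.le ξ x₀
      have h3 : κ * gauss β ξ x₀ ≤ κ := by nlinarith
      have h4 : 0 < Real.exp (-β * d) := Real.exp_pos _
      have h5 : Real.exp (-β * d) ≤ 1 := by
        rw [← Real.exp_zero]
        apply Real.exp_le_exp.mpr
        have : (0:ℝ) ≤ β * d := by positivity
        linarith
      -- M + κ e^{-βd} ≤ H x₀ + κ gauss ≤ M - ρ/2 + κ   ⇒  κ(1 - e^{-βd}) ≥ ρ/2, contra κ = ρ/4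
      have h6 := hvalastar
      simp only [hκdef] at *
      nlinarith
    have hx₀lo : r₀ ≤ ‖x₀ - ξ‖ := by
      by_contra h
      push_neg at h
      exact hx₀out (by rw [Metric.mem_closedBall, dist_eq_norm]; linarith)
    have hx₀hi : ‖x₀ - ξ‖ ≤ R := by
      have := Metric.mem_closedBall.mp hx₀K
      rwa [dist_eq_norm] at this
    have hδpos : 0 < 2 * β * Real.exp (-β * R ^ 2) := by positivity
    -- split on the achieving index at x₀
    rcases le_total (h2 x₀) (h1 x₀) with hidx | hidx
    · -- index 1 achieves the maximum
      have hmaxc : ∀ z, θ * u1 z + (1 - θ) * v1 z - w1 z + κ * gauss β ξ z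
          ≤ θ * u1 x₀ + (1 - θ) * v1 x₀ - w1 x₀ + κ * gauss β ξ x₀ := by
        intro z
        have h1z : h1 z ≤ H z := le_max_left _ _
        have h2z : H x₀ = h1 x₀ := max_eq_left hidx
        have h3z := hFglobal z
        rw [h2z] at h3z
        rw [← hh1eval z, ← hh1eval x₀]
        linarith
      have hcore := core hψ hν2pos hθ0 hθ1 hpb hu1s hv1s hw1s
        hequ1 heqv1 heqw1 (gauss_smooth β ξ) hmaxc
      have hge := gauss_est hβ1 hBnonneg hr₀pos hRpos hβkey hx₀lo hx₀hi (hb1le x₀)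
      have hκge : κ * (2 * β * Real.exp (-β * R ^ 2))
          ≤ κ * (lap (gauss β ξ) x₀
            - @inner ℝ _ _ ((2:ℝ) • (gradient w1 x₀ + pb) - gradient ψ x₀)
              (gradient (gauss β ξ) x₀)) :=
        mul_le_mul_of_nonneg_left hge hκpos.le
      have hterm : 0 ≤ ν2 x₀ * (Real.exp (θ * (u1 x₀ - u2 x₀) + (1 - θ) * (v1 x₀ - v2 x₀))
          - Real.exp (w1 x₀ - w2 x₀)) := by
        apply mul_nonneg (hν2pos x₀).le
        have hge2 : w1 x₀ - w2 x₀ ≤ θ * (u1 x₀ - u2 x₀) + (1 - θ) * (v1 x₀ - v2 x₀) := by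
          have h5 : h2 x₀ ≤ h1 x₀ := hidx
          rw [hh1eval x₀, hh2eval x₀] at h5
          nlinarith [h5]
        have := Real.exp_le_exp.mpr hge2
        linarith
      have hq0 : 0 ≤ θ * (1 - θ) * ‖gradient u1 x₀ - gradient v1 x₀ + (p₁ - p₂)‖ ^ 2 := by
        have : (0:ℝ) < θ * (1 - θ) := by nlinarith
        positivity
      linarith [hcore, hκge, hterm, hq0, hcomb0, mul_pos hκpos hδpos]
    · -- index 2 achieves the maximum
      have hmaxc : ∀ z, θ * u2 z + (1 - θ) * v2 z - w2 z + κ * gauss β ξ z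
          ≤ θ * u2 x₀ + (1 - θ) * v2 x₀ - w2 x₀ + κ * gauss β ξ x₀ := by
        intro z
        have h1z : h2 z ≤ H z := le_max_right _ _
        have h2z : H x₀ = h2 x₀ := max_eq_right hidx
        have h3z := hFglobal z
        rw [h2z] at h3z
        rw [← hh2eval z, ← hh2eval x₀]
        linarith
      have hcore := core hψ0s hν1pos hθ0 hθ1 hpb hu2s hv2s hw2s
        hequ2' heqv2' heqw2' (gauss_smooth β ξ) hmaxc
      have hgrad0ψ : gradient (fun _ : Euc d => (0:ℝ)) x₀ = 0 := gradient_fun_const x₀ (0:ℝ)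
      rw [hgrad0ψ] at hcore
      have hge := gauss_est hβ1 hBnonneg hr₀pos hRpos hβkey hx₀lo hx₀hi (hb2le x₀)
      have hb2eq : (2:ℝ) • (gradient w2 x₀ + pb) - 0 = (2:ℝ) • (gradient w2 x₀ + pb) := by
        rw [sub_zero]
      rw [hb2eq] at hcore
      have hκge : κ * (2 * β * Real.exp (-β * R ^ 2))
          ≤ κ * (lap (gauss β ξ) x₀
            - @inner ℝ _ _ ((2:ℝ) • (gradient w2 x₀ + pb))
              (gradient (gauss β ξ) x₀)) :=
        mul_le_mul_of_nonneg_left hge hκpos.le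
      have hterm : 0 ≤ ν1 x₀ * (Real.exp (θ * (u2 x₀ - u1 x₀) + (1 - θ) * (v2 x₀ - v1 x₀))
          - Real.exp (w2 x₀ - w1 x₀)) := by
        apply mul_nonneg (hν1pos x₀).le
        have hge2 : w2 x₀ - w1 x₀ ≤ θ * (u2 x₀ - u1 x₀) + (1 - θ) * (v2 x₀ - v1 x₀) := by
          have h5 : h1 x₀ ≤ h2 x₀ := hidx
          rw [hh1eval x₀, hh2eval x₀] at h5
          nlinarith [h5]
        have := Real.exp_le_exp.mpr hge2
        linarith
      have hq0 : 0 ≤ θ * (1 - θ) * ‖gradient u2 x₀ - gradient v2 x₀ + (p₁ - p₂)‖ ^ 2 := by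
        have : (0:ℝ) < θ * (1 - θ) := by nlinarith
        positivity
      linarith [hcore, hκge, hterm, hq0, hcomb0, mul_pos hκpos hδpos]


end
end

section
/- There exists a constant C > 0 such that for all p ∈ ℝᵈ, H̄(p) ≥ |p|² − C. In particular H̄(p) → ∞ as |p| → ∞. More precisely, if (φ¹, φ²) is a smooth ℤᵈ-periodic solution of the cell problem at p with constant λ, then λ ≥ |p|² − |p|·‖Dψ‖_∞ − ‖Δψ‖_∞ − max(‖ν¹‖_∞, ‖ν²‖_∞). -/
open MeasureTheory Filter Set
open scoped Topology

noncomputable section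

/-- A continuous `ℤᵈ`-periodic function attains a global maximum. -/
lemma ZPer.exists_max {d : ℕ} (f : Euc d → ℝ) (hc : Continuous f) (hp : ZPer f) :
    ∃ y0 : Euc d, ∀ x, f x ≤ f y0 := by
  set K : Set (Euc d) :=
    (EuclideanSpace.equiv (Fin d) ℝ) ⁻¹' (Set.univ.pi fun _ => Icc (0:ℝ) 1) with hKdef
  have hK : IsCompact K :=
    ((EuclideanSpace.equiv (Fin d) ℝ).toHomeomorph.isCompact_preimage).mpr
      (isCompact_univ_pi fun _ => isCompact_Icc)
  have hne : K.Nonempty := ⟨0, by intro i _; simp⟩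
  obtain ⟨y0, _, hy0⟩ := hK.exists_isMaxOn hne hc.continuousOn
  refine ⟨y0, fun x => ?_⟩
  set k : Fin d → ℤ := fun i => -⌊x i⌋ with hk
  have hmem : x + (EuclideanSpace.equiv (Fin d) ℝ).symm (fun i => (k i : ℝ)) ∈ K := by
    intro i _
    have : (x + (EuclideanSpace.equiv (Fin d) ℝ).symm fun i => ((k i : ℝ))) i
        = Int.fract (x i) := by
      show x i + ((-⌊x i⌋ : ℤ) : ℝ) = Int.fract (x i)
      push_cast [Int.fract]
      ring
    show (x + (EuclideanSpace.equiv (Fin d) ℝ).symm fun i => ((k i : ℝ))) i ∈ Icc (0:ℝ) 1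
    rw [this]
    exact ⟨Int.fract_nonneg _, (Int.fract_lt_one _).le⟩
  calc f x = f (x + (EuclideanSpace.equiv (Fin d) ℝ).symm (fun i => (k i : ℝ))) :=
        (hp x k).symm
    _ ≤ f y0 := hy0 hmem

/-- At a global maximum of a smooth function, the gradient vanishes and the Laplacian is
nonpositive. -/
lemma max_second_order {d : ℕ} (f : Euc d → ℝ) (hf : ContDiff ℝ (⊤ : ℕ∞) f)
    (y0 : Euc d) (hmax : ∀ x, f x ≤ f y0) :
    gradient f y0 = 0 ∧ lap f y0 ≤ 0 := by
  have hloc : IsLocalMax f y0 := Filter.Eventually.of_forall hmax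
  have hf0 : fderiv ℝ f y0 = 0 := hloc.fderiv_eq_zero
  refine ⟨by simp [gradient, hf0], ?_⟩
  refine Finset.sum_nonpos fun i _ => ?_
  set e : Euc d := EuclideanSpace.single i 1 with he
  set L : ℝ → Euc d := fun t => y0 + t • e with hLdef
  have hL : ∀ t, HasDerivAt L e t := fun t => by
    have h := (((hasDerivAt_id t).smul_const e).const_add y0)
    rw [one_smul] at h
    exact h
  have hL0 : L 0 = y0 := by simp [hLdef]
  set F1 : Euc d → ℝ := fun y => fderiv ℝ f y e with hF1def
  have hF1 : ContDiff ℝ (⊤ : ℕ∞) F1 :=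
    (hf.fderiv_right (by simp)).clm_apply contDiff_const
  set g : ℝ → ℝ := fun t => f (L t) with hgdef
  have hg : ∀ t, HasDerivAt g (F1 (L t)) t := fun t =>
    ((hf.differentiable (by simp) (L t)).hasFDerivAt).comp_hasDerivAt t (hL t)
  have hderivg : deriv g = fun t => F1 (L t) := funext fun t => (hg t).deriv
  have hG : HasDerivAt (deriv g) (fderiv ℝ F1 y0 e) 0 := by
    rw [hderivg]
    have hfd : HasFDerivAt F1 (fderiv ℝ F1 y0) (L 0) := by
      rw [hL0]; exact (hF1.differentiable (by simp) y0).hasFDerivAt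
    exact hfd.comp_hasDerivAt 0 (hL 0)
  -- the goal is `fderiv ℝ F1 y0 e ≤ 0` (definitionally)
  show fderiv ℝ (fun y => fderiv ℝ f y e) y0 e ≤ 0
  by_contra hcon
  push_neg at hcon
  set c : ℝ := fderiv ℝ F1 y0 e with hc
  have hcpos : 0 < c := hcon
  have hd0 : deriv g 0 = 0 := by
    rw [hderivg]; simp only [hL0, hF1def, hf0]; rfl
  have hslope : Tendsto (slope (deriv g) 0) (𝓝[≠] 0) (𝓝 c) :=
    hasDerivAt_iff_tendsto_slope.mp hG
  have hev : ∀ᶠ t in 𝓝[≠] (0:ℝ), 0 < slope (deriv g) 0 t :=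
    hslope.eventually (eventually_gt_nhds hcpos)
  have hev' : ∀ᶠ t in 𝓝[>] (0:ℝ), 0 < slope (deriv g) 0 t :=
    hev.filter_mono (nhdsWithin_mono 0 (fun x hx => by
      simp only [mem_compl_iff, mem_singleton_iff]
      exact ne_of_gt hx))
  have hev2 : ∀ᶠ t in 𝓝[>] (0:ℝ), 0 < deriv g t := by
    filter_upwards [hev', self_mem_nhdsWithin] with t ht ht'
    have htpos : (0:ℝ) < t := ht'
    have : slope (deriv g) 0 t = deriv g t / t := by
      simp [slope_def_field, hd0, div_eq_inv_mul]
    rw [this] at ht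
    exact (div_pos_iff.mp ht).resolve_right (fun h => absurd htpos (not_lt.mpr h.2.le)) |>.1
  obtain ⟨u, hu, hsub⟩ := mem_nhdsGT_iff_exists_Ioc_subset.mp hev2
  have hu0 : (0:ℝ) < u := hu
  have hgc : Continuous g := hf.continuous.comp (continuous_const.add (continuous_id.smul continuous_const))
  have hmono : StrictMonoOn g (Icc 0 u) := by
    apply strictMonoOn_of_deriv_pos (convex_Icc 0 u) hgc.continuousOn
    intro t ht
    rw [interior_Icc] at ht
    exact hsub ⟨ht.1, ht.2.le⟩
  have h1 : g 0 < g u := hmono ⟨le_refl 0, hu0.le⟩ ⟨hu0.le, le_refl u⟩ hu0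
  have h2 : g u ≤ g 0 := by
    rw [hgdef]; simp only [hL0]; exact hmax (L u)
  linarith

/-- **Lemma 2.1 (coercivity).** There is `C > 0` with `H̄(p) ≥ |p|² − C` for all `p`; in
particular `H̄(p) → ∞` as `|p| → ∞`. More precisely, any constant `λ` of the cell problem
at `p` satisfies `λ ≥ |p|² − |p|‖Dψ‖_∞ − ‖Δψ‖_∞ − max(‖ν¹‖_∞, ‖ν²‖_∞)`. -/
theorem effective_hamiltonian_coercive
    {d : ℕ} (hd : 1 ≤ d) (ψ ν1 ν2 : Euc d → ℝ) (hdata : GoodData ψ ν1 ν2)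
    (Hbar : Euc d → ℝ)
    (hHbar : ∀ (p : Euc d) (lam : ℝ),
      (∃ φ1 φ2 : Euc d → ℝ, IsCellSol ψ ν1 ν2 p lam φ1 φ2) ↔ lam = Hbar p) :
    (∃ C : ℝ, 0 < C ∧ ∀ p : Euc d, ‖p‖ ^ 2 - C ≤ Hbar p) ∧
    Tendsto Hbar (comap (fun p : Euc d => ‖p‖) atTop) atTop ∧
    (∀ (p : Euc d) (lam : ℝ) (φ1 φ2 : Euc d → ℝ), IsCellSol ψ ν1 ν2 p lam φ1 φ2 →
      ‖p‖ ^ 2 - ‖p‖ * (⨆ y : Euc d, ‖gradient ψ y‖) - (⨆ y : Euc d, |lap ψ y|)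
        - max (⨆ y : Euc d, |ν1 y|) (⨆ y : Euc d, |ν2 y|) ≤ lam) := by
  obtain ⟨hψs, hν1s, hν2s, hψp, hν1p, hν2p, hν1pos, hν2pos⟩ := hdata
  set S2 : ℝ := ⨆ y : Euc d, |ν2 y| with hS2
  have hS2nn : 0 ≤ S2 := Real.iSup_nonneg fun y => abs_nonneg _
  have hbdd : BddAbove (Set.range fun y : Euc d => |ν2 y|) := by
    obtain ⟨y1, hy1⟩ := ZPer.exists_max (fun y => |ν2 y|) hν2s.continuous.abs
      (fun x k => by simp only [hν2p x k])
    exact ⟨|ν2 y1|, forall_mem_range.mpr hy1⟩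
  have key : ∀ (p : Euc d) (lam : ℝ) (φ1 φ2 : Euc d → ℝ),
      IsCellSol ψ ν1 ν2 p lam φ1 φ2 → ‖p‖ ^ 2 - S2 ≤ lam := by
    intro p lam φ1 φ2 hsol
    obtain ⟨hφ1s, hφ2s, hφ1p, hφ2p, heq1, heq2⟩ := hsol
    obtain ⟨y0, hy0⟩ := ZPer.exists_max φ2 hφ2s.continuous hφ2p
    obtain ⟨hgrad, hlap⟩ := max_second_order φ2 hφ2s y0 hy0
    have h2 := heq2 y0
    rw [hgrad, zero_add] at h2
    have hpos : 0 < ν1 y0 * Real.exp (φ2 y0 - φ1 y0) :=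
      mul_pos (hν1pos y0) (Real.exp_pos _)
    have hle : ν2 y0 ≤ S2 :=
      le_trans (le_abs_self _) (le_ciSup hbdd y0)
    linarith
  have part1 : ∀ p : Euc d, ‖p‖ ^ 2 - (S2 + 1) ≤ Hbar p := by
    intro p
    obtain ⟨φ1, φ2, hsol⟩ := (hHbar p (Hbar p)).mpr rfl
    have := key p (Hbar p) φ1 φ2 hsol
    linarith
  refine ⟨⟨S2 + 1, by linarith, part1⟩, ?_, ?_⟩
  · refine tendsto_atTop_mono part1 ?_
    have h1 : Tendsto (fun p : Euc d => ‖p‖) (comap (fun p : Euc d => ‖p‖) atTop) atTop :=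
      tendsto_comap
    have h2 : Tendsto (fun p : Euc d => ‖p‖ ^ 2)
        (comap (fun p : Euc d => ‖p‖) atTop) atTop :=
      (tendsto_pow_atTop two_ne_zero).comp h1
    simpa [sub_eq_add_neg] using tendsto_atTop_add_const_right _ (-(S2 + 1)) h2
  · intro p lam φ1 φ2 hsol
    have hk := key p lam φ1 φ2 hsol
    have hA : 0 ≤ ⨆ y : Euc d, ‖gradient ψ y‖ := Real.iSup_nonneg fun y => norm_nonneg _
    have hB : 0 ≤ ⨆ y : Euc d, |lap ψ y| := Real.iSup_nonneg fun y => abs_nonneg _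
    have hpA : 0 ≤ ‖p‖ * ⨆ y : Euc d, ‖gradient ψ y‖ := mul_nonneg (norm_nonneg p) hA
    have hM : S2 ≤ max (⨆ y : Euc d, |ν1 y|) (⨆ y : Euc d, |ν2 y|) := le_max_right _ _
    linarith


end
end
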